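/- arXiv:2406.09955 — 3 statements merged into one kernel-verified Lean document; each statement's English description precedes it below -/
import Mathlib

section
/- Let (T_t)_{t≥0} be a uniformly continuous semigroup of sublinear transition operators on ℬ, fix t ≥ 0, and let ln T_t denote the limit in operator seminorm of the sequence (n(T_{t/n} − I))_{n∈ℕ}. Then the sequence ((I + (1/n)·ln T_t)^n)_{n∈ℕ} converges in operator seminorm to T_t; that is, T_t equals the operator exponential of ln T_t. -/
open Filter Topology BoundedContinuousFunction ENNReal NNReal

/-- The space of (possibly nonlinear) operators on the Banach space `X →ᵇ ℝ`
of bounded (continuous, i.e. with `X` discrete: all) real-valued functions. -/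
abbrev Op (X : Type*) [TopologicalSpace X] :=
  BoundedContinuousFunction X ℝ → BoundedContinuousFunction X ℝ

/-- The operator seminorm `‖A‖ = sup {‖A f‖/‖f‖ : f ≠ 0}`, a value in `[0,∞]`. -/
noncomputable def opSemiNorm {X : Type*} [TopologicalSpace X] (A : Op X) : ℝ≥0∞ :=
  ⨆ (f : BoundedContinuousFunction X ℝ) (_ : f ≠ 0), (‖A f‖₊ : ℝ≥0∞) / (‖f‖₊ : ℝ≥0∞)

/-- The operator norm distance `d(A,B) = ‖A 0 − B 0‖∞ + ‖A − B‖`. -/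
noncomputable def opDist {X : Type*} [TopologicalSpace X] (A B : Op X) : ℝ≥0∞ :=
  (‖A 0 - B 0‖₊ : ℝ≥0∞) + opSemiNorm (A - B)

/-- Sublinear transition operator: (T1) positive homogeneity, (T2) subadditivity,
(T3) `T f ≤ sup f` pointwise. -/
def IsSublinearTransition {X : Type*} [TopologicalSpace X] (T : Op X) : Prop :=
  (∀ (c : ℝ), 0 ≤ c → ∀ f, T (c • f) = c • T f) ∧
  (∀ f g, ∀ x, T (f + g) x ≤ T f x + T g x) ∧
  (∀ f, ∀ x, T f x ≤ ⨆ y, f y)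

/-- Sublinear rate operator: (Q1) positive homogeneity, (Q2) subadditivity,
(Q3) constants map to zero, (Q4) positive maximum principle. -/
def IsSublinearRate {X : Type*} [TopologicalSpace X] (Q : Op X) : Prop :=
  (∀ (c : ℝ), 0 ≤ c → ∀ f, Q (c • f) = c • Q f) ∧
  (∀ f g, ∀ x, Q (f + g) x ≤ Q f x + Q g x) ∧
  (∀ (c : ℝ), Q (BoundedContinuousFunction.const X c) = 0) ∧
  (∀ f, ∀ x : X, (⨆ y, f y) = f x → 0 ≤ f x → Q f x ≤ 0)

/-- The Euler approximation `(I + (t/n) Q)^n` (n-fold composition). -/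
noncomputable def euler {X : Type*} [TopologicalSpace X] (Q : Op X) (t : ℝ) (n : ℕ) : Op X :=
  (fun f => f + (t / (n : ℝ)) • Q f)^[n]

/-- Uniform continuity of a semigroup `(S_t)_{t ≥ 0}`:
`‖S_s − S_t‖ → 0` as `s → t` (within `s ≥ 0`), for every `t ≥ 0`. -/
def IsUniformlyContinuousSG {X : Type*} [TopologicalSpace X] (S : ℝ → Op X) : Prop :=
  ∀ t : ℝ, 0 ≤ t →
    Tendsto (fun s => opSemiNorm (S s - S t)) (nhdsWithin t (Set.Ici 0)) (nhds 0)

/-- The indicator function `1_x` of the singleton `{x}`. -/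
noncomputable def indic {X : Type*} [TopologicalSpace X] [DiscreteTopology X] (x : X) :
    BoundedContinuousFunction X ℝ :=
  BoundedContinuousFunction.ofNormedAddCommGroup
    (Set.indicator {x} (fun _ => (1 : ℝ))) continuous_of_discreteTopology 1
    (by
      intro y
      classical
      rw [Set.indicator_apply]
      split_ifs <;> simp)

/-- Downward continuity (continuity from above) of an operator. -/
def DownwardContinuous {X : Type*} [TopologicalSpace X] (A : Op X) : Prop :=
  ∀ (f : ℕ → BoundedContinuousFunction X ℝ) (g : BoundedContinuousFunction X ℝ),
    (∀ n x, f (n + 1) x ≤ f n x) →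
    (∀ x, Tendsto (fun n => f n x) atTop (nhds (g x))) →
    ∀ x, Tendsto (fun n => A (f n) x) atTop (nhds (A g x))


section helpers
variable {X : Type*} [TopologicalSpace X]

lemma opSemiNorm_le_of_forall (A : Op X) (C : ℝ≥0)
    (h : ∀ f, ‖A f‖ ≤ (C : ℝ) * ‖f‖) : opSemiNorm A ≤ C := by
  refine iSup₂_le fun f hf => ?_
  rw [ENNReal.div_le_iff (by simpa using hf) ENNReal.coe_ne_top, ← ENNReal.coe_mul,
    ENNReal.coe_le_coe, ← NNReal.coe_le_coe]
  push_cast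
  exact h f

lemma forall_of_opSemiNorm_le (A : Op X) (C : ℝ≥0) (h : opSemiNorm A ≤ C) (h0 : A 0 = 0) :
    ∀ f, ‖A f‖ ≤ (C : ℝ) * ‖f‖ := by
  intro f
  by_cases hf : f = 0
  · simp [hf, h0]
  · have h1 : (‖A f‖₊ : ℝ≥0∞) / ‖f‖₊ ≤ C :=
      (le_iSup₂ (f := fun g (_ : g ≠ 0) => (‖A g‖₊ : ℝ≥0∞) / ‖g‖₊) f hf).trans h
    rw [ENNReal.div_le_iff (by simpa using hf) ENNReal.coe_ne_top, ← ENNReal.coe_mul,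
      ENNReal.coe_le_coe, ← NNReal.coe_le_coe] at h1
    push_cast at h1
    exact h1

lemma transition_zero (Tc : Op X) (h : IsSublinearTransition Tc) : Tc 0 = 0 := by
  have := h.1 0 le_rfl 0
  simpa using this

lemma transition_nonexpansive (Tc : Op X) (h : IsSublinearTransition Tc)
    (f g : BoundedContinuousFunction X ℝ) : ‖Tc f - Tc g‖ ≤ ‖f - g‖ := by
  obtain ⟨h1, h2, h3⟩ := h
  have key : ∀ a b : BoundedContinuousFunction X ℝ, ∀ x, Tc a x - Tc b x ≤ ‖a - b‖ := by
    intro a b x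
    have hab : b + (a - b) = a := by abel
    have hx : Tc a x ≤ Tc b x + Tc (a - b) x := by
      have := h2 b (a - b) x
      rwa [hab] at this
    have : Nonempty X := ⟨x⟩
    have hs : Tc (a - b) x ≤ ‖a - b‖ :=
      (h3 (a - b) x).trans (ciSup_le fun y => (le_abs_self _).trans ((a - b).norm_coe_le_norm y))
    linarith
  rw [BoundedContinuousFunction.norm_le (norm_nonneg _)]
  intro x
  rw [BoundedContinuousFunction.coe_sub, Pi.sub_apply, Real.norm_eq_abs, abs_sub_le_iff]
  exact ⟨key f g x, (key g f x).trans (le_of_eq (norm_sub_rev _ _))⟩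

lemma T_iterate (T : ℝ → Op X) (hT0 : T 0 = id)
    (hTsg : ∀ s t : ℝ, 0 ≤ s → 0 ≤ t → T (s + t) = T s ∘ T t)
    (s : ℝ) (hs : 0 ≤ s) : ∀ k : ℕ, T ((k : ℝ) * s) = (T s)^[k] := by
  intro k
  induction k with
  | zero => simpa using hT0
  | succ k ih =>
    have h1 : ((k + 1 : ℕ) : ℝ) * s = s + (k : ℝ) * s := by push_cast; ring
    rw [h1, hTsg s ((k : ℝ) * s) hs (mul_nonneg (Nat.cast_nonneg k) hs), ih,
      Function.iterate_succ']

set_option maxHeartbeats 1000000 in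
lemma bcf_norm_smul (r : ℝ) (g : BoundedContinuousFunction X ℝ) :
    ‖r • g‖ = |r| * ‖g‖ := by
  rw [show |r| = ‖r‖ from rfl]
  exact norm_smul r g

end helpers
theorem stmt_17 {X : Type*} [Countable X] [TopologicalSpace X] [DiscreteTopology X]
    (T : ℝ → Op X)
    (hT : ∀ t : ℝ, 0 ≤ t → IsSublinearTransition (T t))
    (hT0 : T 0 = id)
    (hTsg : ∀ s t : ℝ, 0 ≤ s → 0 ≤ t → T (s + t) = T s ∘ T t)
    (hUC : IsUniformlyContinuousSG T) (t : ℝ) (ht : 0 ≤ t)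
    (L : Op X)
    (hL : Tendsto (fun n : ℕ => opDist ((n : ℝ) • (T (t / n) - id)) L) atTop (nhds 0)) :
    Tendsto (fun n : ℕ => opSemiNorm (euler L 1 n - T t)) atTop (nhds 0) := by
  classical
  set A : ℕ → Op X := fun n => (n : ℝ) • (T (t / n) - id) with hAdef
  have hTz : ∀ s : ℝ, 0 ≤ s → T s 0 = 0 := fun s hs => transition_zero _ (hT s hs)
  have hTne : ∀ s : ℝ, 0 ≤ s → ∀ f g, ‖T s f - T s g‖ ≤ ‖f - g‖ :=
    fun s hs => transition_nonexpansive _ (hT s hs)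
  have hTb : ∀ s : ℝ, 0 ≤ s → ∀ f, ‖T s f‖ ≤ ‖f‖ := by
    intro s hs f
    have := hTne s hs f 0
    simpa [hTz s hs] using this
  have htn : ∀ n : ℕ, (0:ℝ) ≤ t / n := fun n => div_nonneg ht (Nat.cast_nonneg n)
  have hAz : ∀ n : ℕ, A n 0 = 0 := by
    intro n
    simp [hAdef, Pi.smul_apply, Pi.sub_apply, hTz _ (htn n)]
  have hL0 : L 0 = 0 := by
    have hle : ∀ n : ℕ, (‖L 0‖₊ : ℝ≥0∞) ≤ opDist (A n) L := by
      intro n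
      have h1 : (‖A n 0 - L 0‖₊ : ℝ≥0∞) ≤ opDist (A n) L := le_self_add
      simpa [hAz n] using h1
    have h2 := ge_of_tendsto' hL hle
    simpa using h2
  -- bound on L
  obtain ⟨N₀, hN₀⟩ := (ENNReal.tendsto_atTop_zero.mp hL) 1 one_pos
  have hAbound : ∀ n : ℕ, ∀ f, ‖A n f‖ ≤ (2 * n : ℝ) * ‖f‖ := by
    intro n f
    have h1 : A n f = (n : ℝ) • (T (t / n) f - f) := rfl
    rw [h1, bcf_norm_smul]
    rw [abs_of_nonneg (Nat.cast_nonneg n)]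
    have h2 : ‖T (t / n) f - f‖ ≤ 2 * ‖f‖ := by
      have := norm_sub_le (T (t / n) f) f
      have := hTb _ (htn n) f
      linarith
    calc (n : ℝ) * ‖T (t / n) f - f‖ ≤ (n : ℝ) * (2 * ‖f‖) :=
          mul_le_mul_of_nonneg_left h2 (Nat.cast_nonneg n)
      _ = (2 * n : ℝ) * ‖f‖ := by ring
  have hANL : ∀ f, ‖A N₀ f - L f‖ ≤ (1 : ℝ) * ‖f‖ := by
    have hsemi : opSemiNorm (A N₀ - L) ≤ (1 : ℝ≥0) := by
      have := hN₀ N₀ le_rfl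
      rw [opDist] at this
      exact le_trans le_add_self (by simpa using this)
    intro f
    have := forall_of_opSemiNorm_le (A N₀ - L) 1 hsemi (by simp [hAz, hL0]) f
    simpa using this
  set M : ℝ := 2 * N₀ + 1 with hMdef
  have hM0 : 0 ≤ M := by positivity
  have hLbound : ∀ f, ‖L f‖ ≤ M * ‖f‖ := by
    intro f
    have h1 : L f = A N₀ f - (A N₀ f - L f) := by abel
    calc ‖L f‖ ≤ ‖A N₀ f‖ + ‖A N₀ f - L f‖ := by
          conv_lhs => rw [h1]
          exact norm_sub_le _ _
      _ ≤ (2 * N₀ : ℝ) * ‖f‖ + 1 * ‖f‖ := add_le_add (hAbound N₀ f) (hANL f)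
      _ = M * ‖f‖ := by rw [hMdef]; ring
  -- main part
  rw [ENNReal.tendsto_atTop_zero]
  intro ε hε
  set C : ℝ≥0 := ⟨Real.exp M, (Real.exp_pos _).le⟩ with hCdef
  obtain ⟨η, hη0, hηC⟩ : ∃ η : ℝ≥0, 0 < η ∧ ((η * C : ℝ≥0) : ℝ≥0∞) ≤ ε := by
    rcases eq_or_ne ε ⊤ with hε' | hε'
    · exact ⟨1, one_pos, by simp [hε']⟩
    · refine ⟨ε.toNNReal / (C + 1), ?_, ?_⟩
      · exact div_pos (ENNReal.toNNReal_pos hε.ne' hε') (by positivity)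
      · have h1 : ε.toNNReal / (C + 1) * C ≤ ε.toNNReal := by
          calc ε.toNNReal / (C + 1) * C ≤ ε.toNNReal / (C + 1) * (C + 1) :=
                mul_le_mul_right (le_add_of_nonneg_right zero_le_one) _
            _ = ε.toNNReal := div_mul_cancel₀ _ (by positivity)
        calc ((ε.toNNReal / (C + 1) * C : ℝ≥0) : ℝ≥0∞) ≤ (ε.toNNReal : ℝ≥0∞) :=
              ENNReal.coe_le_coe.mpr h1
          _ = ε := ENNReal.coe_toNNReal hε'
  obtain ⟨N₁, hN₁⟩ := (ENNReal.tendsto_atTop_zero.mp hL) η (by exact_mod_cast hη0)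
  refine ⟨max N₁ 1, fun n hn => ?_⟩
  have hn1 : 1 ≤ n := le_trans (le_max_right _ _) hn
  have hnR : (0:ℝ) < n := by exact_mod_cast hn1
  have hANLn : ∀ f, ‖A n f - L f‖ ≤ (η : ℝ) * ‖f‖ := by
    have hsemi : opSemiNorm (A n - L) ≤ η := by
      have := hN₁ n (le_trans (le_max_left _ _) hn)
      rw [opDist] at this
      exact le_trans le_add_self this
    intro f
    have := forall_of_opSemiNorm_le (A n - L) η hsemi (by simp [hAz, hL0]) f
    simpa using this
  set S : Op X := T (t / n) with hSdef
  set J : Op X := fun f => f + (1 / (n : ℝ)) • L f with hJdef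
  have hSne : ∀ f g, ‖S f - S g‖ ≤ ‖f - g‖ := hTne _ (htn n)
  set c : ℝ := 1 + M / n with hcdef
  have hc0 : 0 ≤ c := by positivity
  have hJb : ∀ f, ‖J f‖ ≤ c * ‖f‖ := by
    intro f
    calc ‖f + (1 / (n : ℝ)) • L f‖ ≤ ‖f‖ + ‖(1 / (n : ℝ)) • L f‖ := norm_add_le _ _
      _ = ‖f‖ + (1 / (n : ℝ)) * ‖L f‖ := by
          rw [bcf_norm_smul, abs_of_nonneg (by positivity : (0:ℝ) ≤ 1 / (n:ℝ))]
      _ ≤ ‖f‖ + (1 / (n : ℝ)) * (M * ‖f‖) :=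
          add_le_add_right (mul_le_mul_of_nonneg_left (hLbound f) (by positivity)) _
      _ = c * ‖f‖ := by rw [hcdef]; field_simp
  have hSJ : ∀ f, ‖S f - J f‖ ≤ ((η : ℝ) / n) * ‖f‖ := by
    intro f
    have heq : S f - J f = (1 / (n : ℝ)) • (A n f - L f) := by
      have h1 : A n f = (n : ℝ) • (S f - f) := rfl
      rw [h1, hJdef, smul_sub, smul_smul]
      rw [one_div_mul_cancel hnR.ne']
      simp [one_smul]
      abel
    rw [heq, bcf_norm_smul, abs_of_nonneg (by positivity : (0:ℝ) ≤ 1 / (n:ℝ))]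
    calc (1 / (n : ℝ)) * ‖A n f - L f‖ ≤ (1 / (n : ℝ)) * ((η : ℝ) * ‖f‖) :=
          mul_le_mul_of_nonneg_left (hANLn f) (by positivity)
      _ = ((η : ℝ) / n) * ‖f‖ := by ring
  have hJiter : ∀ k : ℕ, ∀ f, ‖J^[k] f‖ ≤ c ^ k * ‖f‖ := by
    intro k
    induction k with
    | zero => intro f; simp
    | succ k ih =>
      intro f
      rw [Function.iterate_succ_apply']
      calc ‖J (J^[k] f)‖ ≤ c * ‖J^[k] f‖ := hJb _
        _ ≤ c * (c ^ k * ‖f‖) := mul_le_mul_of_nonneg_left (ih f) hc0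
        _ = c ^ (k + 1) * ‖f‖ := by ring
  have hmain : ∀ k : ℕ, ∀ f, ‖S^[k] f - J^[k] f‖ ≤ (k : ℝ) * ((η : ℝ) / n) * c ^ k * ‖f‖ := by
    intro k
    induction k with
    | zero => intro f; simp
    | succ k ih =>
      intro f
      rw [Function.iterate_succ_apply', Function.iterate_succ_apply']
      have h1 : ‖S (S^[k] f) - S (J^[k] f)‖ ≤ (k : ℝ) * ((η : ℝ) / n) * c ^ k * ‖f‖ :=
        (hSne _ _).trans (ih f)
      have h2 : ‖S (J^[k] f) - J (J^[k] f)‖ ≤ ((η : ℝ) / n) * (c ^ k * ‖f‖) :=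
        (hSJ _).trans (mul_le_mul_of_nonneg_left (hJiter k f) (by positivity))
      have hck : c ^ k ≤ c ^ (k + 1) := by
        have hMn : (0:ℝ) ≤ M / n := by positivity
        have hc1 : 1 ≤ c := by
          rw [hcdef]
          linarith
        exact pow_le_pow_right₀ hc1 (Nat.le_succ k)
      have hηn : (0:ℝ) ≤ (η : ℝ) / n := by positivity
      calc ‖S (S^[k] f) - J (J^[k] f)‖
          ≤ ‖S (S^[k] f) - S (J^[k] f)‖ + ‖S (J^[k] f) - J (J^[k] f)‖ := by
            have h3 : S (S^[k] f) - J (J^[k] f)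
                = (S (S^[k] f) - S (J^[k] f)) + (S (J^[k] f) - J (J^[k] f)) := by abel
            rw [h3]; exact norm_add_le _ _
        _ ≤ (k : ℝ) * ((η : ℝ) / n) * c ^ k * ‖f‖ + ((η : ℝ) / n) * (c ^ k * ‖f‖) :=
            add_le_add h1 h2
        _ = ((k : ℝ) + 1) * ((η : ℝ) / n) * c ^ k * ‖f‖ := by ring
        _ ≤ ((k : ℝ) + 1) * ((η : ℝ) / n) * c ^ (k + 1) * ‖f‖ := by
            gcongr
        _ = ((k + 1 : ℕ) : ℝ) * ((η : ℝ) / n) * c ^ (k + 1) * ‖f‖ := by push_cast; ring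
  have hTt : T t = S^[n] := by
    have h1 := T_iterate T hT0 hTsg (t / n) (htn n) n
    rw [mul_div_cancel₀ t hnR.ne'] at h1
    exact h1
  have heuler : euler L 1 n = J^[n] := by
    rw [euler, hJdef]
  have hcexp : c ^ n ≤ Real.exp M := by
    calc c ^ n ≤ (Real.exp (M / n)) ^ n := by
          refine pow_le_pow_left₀ hc0 ?_ n
          rw [hcdef]
          have := Real.add_one_le_exp (M / n)
          linarith
      _ = Real.exp ((n : ℝ) * (M / n)) := by rw [← Real.exp_nat_mul]
      _ = Real.exp M := by rw [mul_div_cancel₀ M hnR.ne']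
  have hfinal : ∀ f, ‖(euler L 1 n - T t) f‖ ≤ ((η * C : ℝ≥0) : ℝ) * ‖f‖ := by
    intro f
    have h1 : (euler L 1 n - T t) f = J^[n] f - S^[n] f := by
      rw [Pi.sub_apply, heuler, hTt]
    rw [h1, norm_sub_rev]
    calc ‖S^[n] f - J^[n] f‖ ≤ (n : ℝ) * ((η : ℝ) / n) * c ^ n * ‖f‖ := hmain n f
      _ = (η : ℝ) * c ^ n * ‖f‖ := by field_simp
      _ ≤ (η : ℝ) * Real.exp M * ‖f‖ := by
          gcongr
      _ = ((η * C : ℝ≥0) : ℝ) * ‖f‖ := by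
          rw [NNReal.coe_mul]
          rfl
  calc opSemiNorm (euler L 1 n - T t) ≤ ((η * C : ℝ≥0) : ℝ≥0∞) :=
        opSemiNorm_le_of_forall _ _ hfinal
    _ ≤ ε := hηC
end

section
/- Let (T_t)_{t≥0} be a uniformly continuous semigroup of sublinear transition operators on ℬ, and let Q := ln T₁ be the limit in operator seminorm of the sequence (n(T_{1/n} − I))_{n∈ℕ}. Then Q is a bounded sublinear rate operator, and for every t ≥ 0 the sequence ((I + (t/n)Q)^n)_{n∈ℕ} converges in operator seminorm to T_t; that is, T_t = e^{t·ln T₁} for all t ≥ 0. -/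
open Filter Topology BoundedContinuousFunction ENNReal NNReal

section Aux
variable {X : Type*} [TopologicalSpace X]

lemma opSemiNorm_le_of_bound (A : Op X) (c : ℝ) (hc : 0 ≤ c)
    (h : ∀ f, ‖A f‖ ≤ c * ‖f‖) : opSemiNorm A ≤ ENNReal.ofReal c := by
  refine iSup₂_le fun f hf => ?_
  rw [ENNReal.div_le_iff_le_mul (Or.inl ?_) (Or.inl ENNReal.coe_ne_top)]
  · rw [← ENNReal.ofReal_coe_nnreal, coe_nnnorm, ← ENNReal.ofReal_coe_nnreal, coe_nnnorm,
      ← ENNReal.ofReal_mul hc]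
    exact ENNReal.ofReal_le_ofReal (h f)
  · simpa using hf

lemma bound_of_opSemiNorm_le (A : Op X) (c : ℝ) (hc : 0 ≤ c)
    (h : opSemiNorm A ≤ ENNReal.ofReal c) (h0 : A 0 = 0) :
    ∀ f, ‖A f‖ ≤ c * ‖f‖ := by
  intro f
  rcases eq_or_ne f 0 with rfl | hf
  · simp [h0]
  have h1 : (‖A f‖₊ : ℝ≥0∞) / (‖f‖₊ : ℝ≥0∞) ≤ ENNReal.ofReal c :=
    le_trans (le_iSup₂ (f := fun f _ => (‖A f‖₊ : ℝ≥0∞) / (‖f‖₊ : ℝ≥0∞)) f hf) h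
  rw [ENNReal.div_le_iff_le_mul (Or.inl (by simpa using hf)) (Or.inl ENNReal.coe_ne_top),
    ← ENNReal.ofReal_coe_nnreal, coe_nnnorm, ← ENNReal.ofReal_coe_nnreal, coe_nnnorm, ← ENNReal.ofReal_mul hc] at h1
  exact (ENNReal.ofReal_le_ofReal_iff (by positivity)).mp h1

end Aux
section Aux2
variable {X : Type*} [TopologicalSpace X]

lemma sup_le_norm (f : BoundedContinuousFunction X ℝ) : (⨆ y, f y) ≤ ‖f‖ :=
  Real.iSup_le (fun y => (le_abs_self _).trans (f.norm_coe_le_norm y)) (norm_nonneg f)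

lemma trans_zero {T : Op X} (h : IsSublinearTransition T) : T 0 = 0 := by
  have := h.1 0 le_rfl 0
  simpa using this

lemma trans_lip {T : Op X} (h : IsSublinearTransition T) (f g : BoundedContinuousFunction X ℝ) :
    ‖T f - T g‖ ≤ ‖f - g‖ := by
  have key : ∀ u v : BoundedContinuousFunction X ℝ, ∀ x, T u x - T v x ≤ ‖u - v‖ := by
    intro u v x
    have h1 : T u x ≤ T v x + T (u - v) x := by
      have := h.2.1 v (u - v) x
      simpa [add_sub_cancel] using this
    have h2 : T (u - v) x ≤ ‖u - v‖ := (h.2.2 (u - v) x).trans (sup_le_norm _)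
    linarith
  rw [BoundedContinuousFunction.norm_le (norm_nonneg _)]
  intro x
  rw [BoundedContinuousFunction.sub_apply, Real.norm_eq_abs, abs_le]
  constructor
  · have := key g f x
    have h2 : ‖g - f‖ = ‖f - g‖ := by rw [← neg_sub, norm_neg]
    linarith [h2 ▸ this]
  · exact key f g x

lemma trans_norm_le {T : Op X} (h : IsSublinearTransition T) (f : BoundedContinuousFunction X ℝ) :
    ‖T f‖ ≤ ‖f‖ := by
  have := trans_lip h f 0
  rw [trans_zero h] at this
  simpa using this

lemma trans_const {T : Op X} (h : IsSublinearTransition T) (c : ℝ) :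
    T (BoundedContinuousFunction.const X c) = BoundedContinuousFunction.const X c := by
  ext x
  have : Nonempty X := ⟨x⟩
  have hup : T (BoundedContinuousFunction.const X c) x ≤ c := by
    have := h.2.2 (BoundedContinuousFunction.const X c) x
    simpa [ciSup_const] using this
  have hdown : c ≤ T (BoundedContinuousFunction.const X c) x := by
    have hsum : (BoundedContinuousFunction.const X c) + (BoundedContinuousFunction.const X (-c))
        = 0 := by ext y; simp
    have h0 : T 0 x = 0 := by rw [trans_zero h]; rfl
    have h1 := h.2.1 (BoundedContinuousFunction.const X c)
      (BoundedContinuousFunction.const X (-c)) x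
    rw [hsum, h0] at h1
    have h2 : T (BoundedContinuousFunction.const X (-c)) x ≤ -c := by
      have := h.2.2 (BoundedContinuousFunction.const X (-c)) x
      simpa [ciSup_const] using this
    linarith
  exact le_antisymm hup hdown

end Aux2
section Aux3
variable {X : Type*} [TopologicalSpace X]

lemma iter_norm_le {S : Op X} (hS : ∀ f, ‖S f‖ ≤ ‖f‖) :
    ∀ (k : ℕ) f, ‖S^[k] f‖ ≤ ‖f‖ := by
  intro k
  induction k with
  | zero => intro f; simp
  | succ k ih =>
    intro f
    rw [Function.iterate_succ_apply']
    exact (hS _).trans (ih f)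

lemma iter_diff {S : Op X} {d : ℝ} (hSnorm : ∀ f, ‖S f‖ ≤ ‖f‖) (hd0 : 0 ≤ d)
    (hS : ∀ g, ‖S g - g‖ ≤ d * ‖g‖) :
    ∀ (k : ℕ) f, ‖S^[k] f - f‖ ≤ (k : ℝ) * d * ‖f‖ := by
  intro k
  induction k with
  | zero => intro f; simp
  | succ k ih =>
    intro f
    rw [Function.iterate_succ_apply']
    have key : S (S^[k] f) - f = (S (S^[k] f) - S^[k] f) + (S^[k] f - f) := by abel
    calc ‖S (S^[k] f) - f‖ ≤ ‖S (S^[k] f) - S^[k] f‖ + ‖S^[k] f - f‖ := by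
          rw [key]; exact norm_add_le _ _
      _ ≤ d * ‖S^[k] f‖ + (k : ℝ) * d * ‖f‖ := add_le_add (hS _) (ih f)
      _ ≤ d * ‖f‖ + (k : ℝ) * d * ‖f‖ := by
          have := iter_norm_le hSnorm k f
          nlinarith
      _ = ((k + 1 : ℕ) : ℝ) * d * ‖f‖ := by push_cast; ring

lemma iter_gen {S Q : Op X} {h L c d : ℝ}
    (hSnorm : ∀ f, ‖S f‖ ≤ ‖f‖)
    (hQLip : ∀ f g, ‖Q f - Q g‖ ≤ L * ‖f - g‖)
    (hc : ∀ g, ‖S g - g - h • Q g‖ ≤ c * ‖g‖)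
    (hd : ∀ g, ‖S g - g‖ ≤ d * ‖g‖)
    (hh : 0 ≤ h) (hL : 0 ≤ L) (hc0 : 0 ≤ c) (hd0 : 0 ≤ d) :
    ∀ (k : ℕ) f, ‖S^[k] f - f - ((k : ℝ) * h) • Q f‖ ≤
      ((k : ℝ) * c + h * L * d * (k : ℝ) ^ 2) * ‖f‖ := by
  intro k
  induction k with
  | zero => intro f; simp
  | succ k ih =>
    intro f
    rw [Function.iterate_succ_apply']
    set g := S^[k] f with hg
    have hsplit : S g - f - (((k + 1 : ℕ) : ℝ) * h) • Q f =
        (S g - g - h • Q g) + (g - f - ((k : ℝ) * h) • Q f) + h • (Q g - Q f) := by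
      have : (((k + 1 : ℕ) : ℝ) * h) = (k : ℝ) * h + h := by push_cast; ring
      rw [this, smul_sub, add_smul]
      abel
    have h1 : ‖S g - g - h • Q g‖ ≤ c * ‖f‖ :=
      (hc g).trans (by have := iter_norm_le hSnorm k f; nlinarith)
    have hQgf : ‖Q g - Q f‖ ≤ L * ((k : ℝ) * d * ‖f‖) := by
      refine (hQLip g f).trans ?_
      have := iter_diff hSnorm hd0 hd k f
      nlinarith [norm_nonneg (g - f)]
    have h3 : ‖h • (Q g - Q f)‖ ≤ h * (L * ((k : ℝ) * d * ‖f‖)) := by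
      rw [norm_smul h (Q g - Q f), Real.norm_eq_abs, abs_of_nonneg hh]
      nlinarith [norm_nonneg (Q g - Q f)]
    calc ‖S g - f - (((k + 1 : ℕ) : ℝ) * h) • Q f‖
        ≤ ‖S g - g - h • Q g‖ + ‖g - f - ((k : ℝ) * h) • Q f‖ + ‖h • (Q g - Q f)‖ := by
          rw [hsplit]; exact norm_add₃_le
      _ ≤ c * ‖f‖ + ((k : ℝ) * c + h * L * d * (k : ℝ) ^ 2) * ‖f‖
            + h * (L * ((k : ℝ) * d * ‖f‖)) := add_le_add (add_le_add h1 (ih f)) h3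
      _ ≤ (((k + 1 : ℕ) : ℝ) * c + h * L * d * ((k + 1 : ℕ) : ℝ) ^ 2) * ‖f‖ := by
          push_cast
          nlinarith [norm_nonneg f, sq_nonneg ((k : ℝ)),
            mul_nonneg (mul_nonneg (mul_nonneg (mul_nonneg hh hL) hd0)
              (by positivity : (0:ℝ) ≤ (k : ℝ) + 1)) (norm_nonneg f)]

lemma iter_compare {S R : Op X} {l ψ : ℝ}
    (hSnorm : ∀ f, ‖S f‖ ≤ ‖f‖)
    (hRlip : ∀ f g, ‖R f - R g‖ ≤ l * ‖f - g‖) (hl : 1 ≤ l)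
    (hψ : ∀ g, ‖R g - S g‖ ≤ ψ * ‖g‖) (hψ0 : 0 ≤ ψ) :
    ∀ (k : ℕ) f, ‖R^[k] f - S^[k] f‖ ≤ (k : ℝ) * l ^ k * ψ * ‖f‖ := by
  intro k
  induction k with
  | zero => intro f; simp
  | succ k ih =>
    intro f
    rw [Function.iterate_succ_apply', Function.iterate_succ_apply']
    have hsplit : R (R^[k] f) - S (S^[k] f) =
        (R (R^[k] f) - R (S^[k] f)) + (R (S^[k] f) - S (S^[k] f)) := by abel
    have hl0 : (0:ℝ) ≤ l := le_trans zero_le_one hl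
    have hih := ih f
    have h1 : ‖R (R^[k] f) - R (S^[k] f)‖ ≤ l * ((k : ℝ) * l ^ k * ψ * ‖f‖) := by
      refine (hRlip _ _).trans ?_
      nlinarith [hih, norm_nonneg (R^[k] f - S^[k] f), pow_nonneg hl0 k]
    have h2 : ‖R (S^[k] f) - S (S^[k] f)‖ ≤ ψ * ‖f‖ :=
      (hψ _).trans (by nlinarith [iter_norm_le hSnorm k f])
    have hlk : (1 : ℝ) ≤ l ^ (k+1) := by
      have : ∀ m : ℕ, (1:ℝ) ≤ l ^ m := by
        intro m
        induction m with
        | zero => simp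
        | succ m ihm => rw [pow_succ]; nlinarith
      exact this (k+1)
    have hps : l ^ (k+1) = l ^ k * l := pow_succ l k
    calc ‖R (R^[k] f) - S (S^[k] f)‖
        ≤ ‖R (R^[k] f) - R (S^[k] f)‖ + ‖R (S^[k] f) - S (S^[k] f)‖ := by
          rw [hsplit]; exact norm_add_le _ _
      _ ≤ l * ((k : ℝ) * l ^ k * ψ * ‖f‖) + ψ * ‖f‖ := add_le_add h1 h2
      _ ≤ ((k + 1 : ℕ) : ℝ) * l ^ (k + 1) * ψ * ‖f‖ := by
          push_cast
          rw [hps]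
          nlinarith [mul_le_mul_of_nonneg_right (hps ▸ hlk) (mul_nonneg hψ0 (norm_nonneg f))]

end Aux3
section Main
variable {X : Type*} [TopologicalSpace X]

lemma eval_tendsto {u : ℕ → BoundedContinuousFunction X ℝ} {v : BoundedContinuousFunction X ℝ}
    (h : Tendsto u atTop (nhds v)) (x : X) :
    Tendsto (fun n => u n x) atTop (nhds (v x)) :=
  ((continuous_eval_const x).tendsto v).comp h

end Main

set_option maxHeartbeats 2000000 in
theorem stmt_18 {X : Type*} [Countable X] [TopologicalSpace X] [DiscreteTopology X]
    (T : ℝ → Op X)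
    (hT : ∀ t : ℝ, 0 ≤ t → IsSublinearTransition (T t))
    (hT0 : T 0 = id)
    (hTsg : ∀ s t : ℝ, 0 ≤ s → 0 ≤ t → T (s + t) = T s ∘ T t)
    (hUC : IsUniformlyContinuousSG T)
    (Q : Op X)
    (hQdef : Tendsto (fun n : ℕ => opDist ((n : ℝ) • (T (1 / n) - id)) Q) atTop (nhds 0)) :
    (IsSublinearRate Q ∧ opSemiNorm Q ≠ ⊤) ∧
    ∀ t : ℝ, 0 ≤ t →
      Tendsto (fun n => opSemiNorm (euler Q t n - T t)) atTop (nhds 0) := by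
  classical
  set A : ℕ → Op X := fun n => (n : ℝ) • (T (1 / (n : ℝ)) - id) with hA
  have hQdef' : Tendsto (fun n : ℕ => opDist (A n) Q) atTop (nhds 0) := hQdef
  -- basic facts
  have hT00 : ∀ t : ℝ, 0 ≤ t → T t 0 = 0 := fun t ht => trans_zero (hT t ht)
  have hTnorm : ∀ t : ℝ, 0 ≤ t → ∀ f, ‖T t f‖ ≤ ‖f‖ := fun t ht => trans_norm_le (hT t ht)
  have hinv : ∀ n : ℕ, (0:ℝ) ≤ 1 / (n:ℝ) := fun n => by positivity
  have hAapp : ∀ (n : ℕ) f, A n f = (n : ℝ) • (T (1 / (n:ℝ)) f - f) := by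
    intro n f; simp [hA]
  have hA0 : ∀ n : ℕ, A n 0 = 0 := by
    intro n
    rw [hAapp, hT00 _ (hinv n)]
    simp
  have hQd := ENNReal.tendsto_nhds_zero.mp hQdef'
  have hQ0 : Q 0 = 0 := by
    have hle : ∀ εr : ℝ, 0 < εr → ‖Q 0‖ ≤ εr := by
      intro εr hε
      obtain ⟨n, hn⟩ := (hQd (ENNReal.ofReal εr) (by simp [hε])).exists
      have h1 : (‖A n 0 - Q 0‖₊ : ℝ≥0∞) ≤ ENNReal.ofReal εr := le_trans le_self_add hn
      rw [hA0 n, zero_sub, nnnorm_neg, ← ENNReal.ofReal_coe_nnreal, coe_nnnorm] at h1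
      exact (ENNReal.ofReal_le_ofReal_iff hε.le).mp h1
    have h2 : ‖Q 0‖ ≤ 0 := by
      by_contra hq
      push_neg at hq
      linarith [hle (‖Q 0‖ / 2) (by linarith)]
    rw [← norm_eq_zero]
    linarith [norm_nonneg (Q 0)]
  have hAQ : ∀ εr : ℝ, 0 < εr → ∀ᶠ n : ℕ in atTop, ∀ f, ‖A n f - Q f‖ ≤ εr * ‖f‖ := by
    intro εr hε
    filter_upwards [hQd (ENNReal.ofReal εr) (by simp [hε])] with n hn
    have hs : opSemiNorm (A n - Q) ≤ ENNReal.ofReal εr := le_trans le_add_self hn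
    have h0 : (A n - Q) 0 = 0 := by simp [Pi.sub_apply, hA0 n, hQ0]
    intro f
    have := bound_of_opSemiNorm_le (A n - Q) εr hε.le hs h0 f
    simpa [Pi.sub_apply] using this
  have hQlim : ∀ f, Tendsto (fun n => A n f) atTop (nhds (Q f)) := by
    intro f
    rw [Metric.tendsto_atTop]
    intro ε hε
    have hε2 : 0 < ε / (2 * (‖f‖ + 1)) := by positivity
    obtain ⟨N, hN⟩ := eventually_atTop.mp (hAQ _ hε2)
    refine ⟨N, fun n hn => ?_⟩
    rw [dist_eq_norm]
    have h1 := hN n hn f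
    have h2 : ε / (2 * (‖f‖ + 1)) * ‖f‖ < ε := by
      rw [div_mul_eq_mul_div, div_lt_iff₀ (by positivity)]
      nlinarith [norm_nonneg f]
    linarith
  -- Q is a sublinear rate operator
  have hQ1 : ∀ (c : ℝ), 0 ≤ c → ∀ f, Q (c • f) = c • Q f := by
    intro c hc f
    refine tendsto_nhds_unique (hQlim (c • f)) ?_
    have heq : ∀ n : ℕ, A n (c • f) = c • A n f := by
      intro n
      rw [hAapp, hAapp, (hT _ (hinv n)).1 c hc f]
      ext x
      simp only [BoundedContinuousFunction.coe_smul, BoundedContinuousFunction.sub_apply,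
        smul_eq_mul]
      ring
    simp_rw [heq]
    exact (hQlim f).const_smul c
  have hQ2 : ∀ f g, ∀ x, Q (f + g) x ≤ Q f x + Q g x := by
    intro f g x
    have h1 := eval_tendsto (hQlim (f + g)) x
    have h2 := (eval_tendsto (hQlim f) x).add (eval_tendsto (hQlim g) x)
    refine le_of_tendsto_of_tendsto' h1 h2 fun n => ?_
    simp only [hAapp, BoundedContinuousFunction.coe_smul,
      BoundedContinuousFunction.sub_apply, BoundedContinuousFunction.add_apply, smul_eq_mul]
    have h3 := (hT _ (hinv n)).2.1 f g x
    have hn0 : (0:ℝ) ≤ (n:ℝ) := Nat.cast_nonneg n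
    nlinarith
  have hQ3 : ∀ (c : ℝ), Q (BoundedContinuousFunction.const X c) = 0 := by
    intro c
    refine tendsto_nhds_unique (hQlim (BoundedContinuousFunction.const X c)) ?_
    have heq : ∀ n : ℕ, A n (BoundedContinuousFunction.const X c) = 0 := by
      intro n
      rw [hAapp, trans_const (hT _ (hinv n)) c]
      simp
    simp_rw [heq]
    exact tendsto_const_nhds
  have hQ4 : ∀ f, ∀ x : X, (⨆ y, f y) = f x → 0 ≤ f x → Q f x ≤ 0 := by
    intro f x hsup _
    have h1 := eval_tendsto (hQlim f) x
    refine le_of_tendsto h1 (Filter.Eventually.of_forall fun n => ?_)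
    simp only [hAapp, BoundedContinuousFunction.coe_smul,
      BoundedContinuousFunction.sub_apply, smul_eq_mul]
    have h3 : T (1/(n:ℝ)) f x ≤ f x := by
      have := (hT _ (hinv n)).2.2 f x
      rw [hsup] at this
      exact this
    have hn0 : (0:ℝ) ≤ (n:ℝ) := Nat.cast_nonneg n
    nlinarith
  -- boundedness of Q
  have hAbnd : ∀ (n : ℕ) f, ‖A n f‖ ≤ (2 * (n:ℝ)) * ‖f‖ := by
    intro n f
    rw [hAapp, norm_smul ((n:ℝ)) (T (1/(n:ℝ)) f - f)]
    have h1 : ‖T (1/(n:ℝ)) f - f‖ ≤ 2 * ‖f‖ := by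
      have h2 := hTnorm _ (hinv n) f
      have := norm_sub_le (T (1/(n:ℝ)) f) f
      linarith
    have hn0 : (0:ℝ) ≤ (n:ℝ) := Nat.cast_nonneg n
    rw [Real.norm_eq_abs, abs_of_nonneg hn0]
    nlinarith [norm_nonneg (T (1/(n:ℝ)) f - f)]
  obtain ⟨n₀, hn₀⟩ := (hAQ 1 one_pos).exists
  set L : ℝ := 2 * (n₀:ℝ) + 1 with hLdef
  have hL0 : (0:ℝ) ≤ L := by positivity
  have hQbnd : ∀ f, ‖Q f‖ ≤ L * ‖f‖ := by
    intro f
    have h1 : Q f = A n₀ f - (A n₀ f - Q f) := by abel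
    rw [h1]
    have h4 := norm_sub_le (A n₀ f) (A n₀ f - Q f)
    have h2 := hn₀ f
    have h3 := hAbnd n₀ f
    rw [hLdef]
    linarith
  clear_value L
  have hQtop : opSemiNorm Q ≠ ⊤ :=
    ne_top_of_le_ne_top ENNReal.ofReal_ne_top (opSemiNorm_le_of_bound Q L hL0 hQbnd)
  have hQLip : ∀ f g, ‖Q f - Q g‖ ≤ L * ‖f - g‖ := by
    have key : ∀ u v : BoundedContinuousFunction X ℝ, ∀ x : X, Q u x - Q v x ≤ L * ‖u - v‖ := by
      intro u v x
      have h1 : Q u x ≤ Q (u - v) x + Q v x := by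
        have := hQ2 (u - v) v x
        simpa [sub_add_cancel] using this
      have h2 : Q (u - v) x ≤ L * ‖u - v‖ := by
        have ha : Q (u-v) x ≤ |Q (u-v) x| := le_abs_self _
        have hb : |Q (u-v) x| ≤ ‖Q (u-v)‖ := by
          rw [← Real.norm_eq_abs]
          exact (Q (u-v)).norm_coe_le_norm x
        have := hQbnd (u - v)
        linarith
      linarith
    intro f g
    rw [BoundedContinuousFunction.norm_le (by positivity)]
    intro x
    rw [BoundedContinuousFunction.sub_apply, Real.norm_eq_abs, abs_le]
    constructor
    · have h5 := key g f x
      have h2 : ‖g - f‖ = ‖f - g‖ := by rw [← neg_sub, norm_neg]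
      rw [h2] at h5
      linarith
    · exact key f g x
  -- uniform continuity at zero
  have hUC0 : ∀ εr : ℝ, 0 < εr → ∃ δ > 0, ∀ s : ℝ, 0 ≤ s → s < δ →
      ∀ g, ‖T s g - g‖ ≤ εr * ‖g‖ := by
    intro εr hε
    have h := hUC 0 le_rfl
    rw [hT0] at h
    have h2 := (ENNReal.tendsto_nhds_zero.mp h) (ENNReal.ofReal εr) (by simp [hε])
    rw [eventually_nhdsWithin_iff, Metric.eventually_nhds_iff] at h2
    obtain ⟨δ, hδ, hh⟩ := h2
    refine ⟨δ, hδ, fun s hs0 hsδ g => ?_⟩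
    have hdist : dist s 0 < δ := by
      rw [Real.dist_eq, sub_zero, abs_of_nonneg hs0]; exact hsδ
    have h3 : opSemiNorm (T s - id) ≤ ENNReal.ofReal εr := hh hdist hs0
    have h0 : (T s - (id : Op X)) 0 = 0 := by simp [Pi.sub_apply, hT00 s hs0]
    have := bound_of_opSemiNorm_le _ εr hε.le h3 h0 g
    simpa [Pi.sub_apply] using this
  -- iterates of the semigroup
  have hTiter : ∀ h : ℝ, 0 ≤ h → ∀ k : ℕ, T ((k:ℝ) * h) = (T h)^[k] := by
    intro h hh k
    induction k with
    | zero => simpa using hT0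
    | succ k ih =>
      have hcast : ((k+1:ℕ):ℝ) * h = h + (k:ℝ) * h := by push_cast; ring
      rw [hcast, hTsg h ((k:ℝ)*h) hh (by positivity), ih]
      exact (Function.iterate_succ' _ _).symm
  -- the key o(h) estimate : ‖T_h - I - h Q‖ ≤ L² h²
  have hpsi : ∀ h : ℝ, 0 ≤ h → h ≤ 1 → ∀ f, ‖T h f - f - h • Q f‖ ≤ (L^2 * h^2) * ‖f‖ := by
    intro h hh0 hh1 f
    have main : ∀ η : ℝ, 0 < η → ‖T h f - f - h • Q f‖ ≤ (L^2 * h^2) * ‖f‖ + η := by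
      intro η hη
      set F : ℝ := ‖f‖ with hF
      clear_value F
      have hF0 : 0 ≤ F := hF ▸ norm_nonneg f
      set ε' : ℝ := η / (4 * (F + 1) * (1 + L)) with hε'
      clear_value ε'
      have hε'pos : 0 < ε' := by rw [hε']; positivity
      obtain ⟨δ, hδ, hφ⟩ := hUC0 ε' hε'pos
      obtain ⟨N, hN⟩ := eventually_atTop.mp (hAQ ε' hε'pos)
      obtain ⟨m₁, hm₁⟩ := exists_nat_ge (max (1/δ + 1) (4 * L * (F+1) / η))
      set m : ℕ := max (max N 1) m₁ with hm
      have hm1 : 1 ≤ m := le_trans (le_max_right N 1) (le_max_left _ _)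
      have hmpos : (0:ℝ) < (m:ℝ) := by
        have : (1:ℝ) ≤ (m:ℝ) := by exact_mod_cast hm1
        linarith
      have hmN : N ≤ m := le_trans (le_max_left N 1) (le_max_left _ _)
      have hm₁' : (m₁:ℝ) ≤ (m:ℝ) := by exact_mod_cast le_max_right (max N 1) m₁
      clear_value m
      have hmδ : 1 / (m:ℝ) < δ := by
        have h1 : 1/δ + 1 ≤ (m:ℝ) := le_trans (le_max_left _ _) (le_trans hm₁ hm₁')
        rw [div_lt_iff₀ hmpos]
        have h2 : δ * (1/δ + 1) ≤ δ * (m:ℝ) := mul_le_mul_of_nonneg_left h1 hδ.le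
        have h3 : δ * (1/δ) = 1 := by field_simp
        nlinarith
      have hmL : L * (F + 1) / (m:ℝ) ≤ η / 4 := by
        have h1 : 4 * L * (F+1) / η ≤ (m:ℝ) := le_trans (le_max_right _ _) (le_trans hm₁ hm₁')
        have h2 : η * (4*L*(F+1)/η) ≤ η * (m:ℝ) := mul_le_mul_of_nonneg_left h1 hη.le
        have h3 : η * (4*L*(F+1)/η) = 4*L*(F+1) := by field_simp
        rw [div_le_div_iff₀ hmpos (by norm_num : (0:ℝ) < 4)]
        nlinarith
      -- the split point
      set k : ℕ := ⌊h * (m:ℝ)⌋₊ with hk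
      have hk_le : (k:ℝ) ≤ h * m := Nat.floor_le (by positivity)
      have hk_gt : h * (m:ℝ) < (k:ℝ) + 1 := Nat.lt_floor_add_one _
      have hk0 : (0:ℝ) ≤ (k:ℝ) := Nat.cast_nonneg k
      clear_value k
      set r : ℝ := h - (k:ℝ) / m with hr
      clear_value r
      have hr0 : 0 ≤ r := by
        rw [hr, sub_nonneg, div_le_iff₀ hmpos]
        linarith
      have hrm : r < 1 / (m:ℝ) := by
        rw [hr, sub_lt_iff_lt_add, ← add_div, lt_div_iff₀ hmpos]
        linarith
      have hrδ : r < δ := lt_trans hrm hmδ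
      set S : Op X := T (1 / (m:ℝ)) with hS
      have hSnorm : ∀ u, ‖S u‖ ≤ ‖u‖ := hTnorm _ (by positivity)
      set g : BoundedContinuousFunction X ℝ := S^[k] f with hg
      have hgf : ‖g‖ ≤ F := hF ▸ iter_norm_le hSnorm k f
      -- composition
      have hcomp : T h f = T r g := by
        have h1 : h = r + (k:ℝ) * (1 / (m:ℝ)) := by rw [hr]; ring
        rw [h1, hTsg r ((k:ℝ) * (1/(m:ℝ))) hr0 (by positivity), hTiter _ (by positivity) k]
        rfl
      -- one-step estimates for S
      have hc : ∀ u, ‖S u - u - (1/(m:ℝ)) • Q u‖ ≤ (ε' / (m:ℝ)) * ‖u‖ := by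
        intro u
        have h1 := hN m hmN u
        have h2 : S u - u - (1/(m:ℝ)) • Q u = (1/(m:ℝ)) • (A m u - Q u) := by
          have hmne : (m:ℝ) ≠ 0 := ne_of_gt hmpos
          rw [hAapp]
          ext x
          simp only [BoundedContinuousFunction.coe_smul, BoundedContinuousFunction.sub_apply,
            smul_eq_mul, hS]
          field_simp
        rw [h2, norm_smul ((1:ℝ)/(m:ℝ)) (A m u - Q u), Real.norm_eq_abs,
          abs_of_nonneg (by positivity : (0:ℝ) ≤ 1/(m:ℝ))]
        calc (1:ℝ)/(m:ℝ) * ‖A m u - Q u‖ ≤ 1/(m:ℝ) * (ε' * ‖u‖) :=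
            mul_le_mul_of_nonneg_left h1 (by positivity)
          _ = ε'/(m:ℝ) * ‖u‖ := by ring
      have hd : ∀ u, ‖S u - u‖ ≤ ((ε' + L) / (m:ℝ)) * ‖u‖ := by
        intro u
        have h1 := hc u
        have h2 : S u - u = (S u - u - (1/(m:ℝ)) • Q u) + (1/(m:ℝ)) • Q u := by abel
        have h3 : ‖(1/(m:ℝ)) • Q u‖ ≤ (L / (m:ℝ)) * ‖u‖ := by
          rw [norm_smul ((1:ℝ)/(m:ℝ)) (Q u), Real.norm_eq_abs,
            abs_of_nonneg (by positivity : (0:ℝ) ≤ 1/(m:ℝ))]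
          have h4 := hQbnd u
          calc (1:ℝ)/(m:ℝ) * ‖Q u‖ ≤ 1/(m:ℝ) * (L * ‖u‖) :=
              mul_le_mul_of_nonneg_left h4 (by positivity)
            _ = (L/(m:ℝ)) * ‖u‖ := by ring
        have h5 := norm_add_le (S u - u - (1/(m:ℝ)) • Q u) ((1/(m:ℝ)) • Q u)
        rw [← h2] at h5
        calc ‖S u - u‖ ≤ ‖S u - u - (1/(m:ℝ)) • Q u‖ + ‖(1/(m:ℝ)) • Q u‖ := h5
          _ ≤ (ε' / (m:ℝ)) * ‖u‖ + (L / (m:ℝ)) * ‖u‖ := add_le_add h1 h3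
          _ = ((ε' + L) / (m:ℝ)) * ‖u‖ := by ring
      -- multi-step estimate
      have hb2 := iter_gen (S := S) (Q := Q) hSnorm hQLip hc hd
        (by positivity) hL0 (by positivity) (by positivity) k f
      rw [← hF] at hb2
      -- final decomposition
      have hsplit : T h f - f - h • Q f =
          (T r g - g) + (S^[k] f - f - ((k:ℝ) * (1/(m:ℝ))) • Q f)
            + (((k:ℝ) * (1/(m:ℝ))) • Q f - h • Q f) := by
        rw [hcomp, ← hg]; abel
      have hb1 : ‖T r g - g‖ ≤ ε' * F := by
        have h5 := hφ r hr0 hrδ g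
        nlinarith
      have hb3 : ‖((k:ℝ) * (1/(m:ℝ))) • Q f - h • Q f‖ ≤ (L / (m:ℝ)) * F := by
        have h1 : ((k:ℝ) * (1/(m:ℝ))) • Q f - h • Q f = (-r) • Q f := by
          rw [hr]
          ext x
          simp only [BoundedContinuousFunction.coe_smul, BoundedContinuousFunction.sub_apply,
            smul_eq_mul]
          ring
        rw [h1, norm_smul (-r) (Q f), Real.norm_eq_abs, abs_neg, abs_of_nonneg hr0]
        have h2 := hQbnd f
        rw [← hF] at h2
        calc r * ‖Q f‖ ≤ (1/(m:ℝ)) * (L * F) := by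
              apply mul_le_mul hrm.le h2 (norm_nonneg _) (by positivity)
          _ = (L/(m:ℝ)) * F := by ring
      -- combine
      have htotal : ‖T h f - f - h • Q f‖ ≤
          ε' * F + ((k:ℝ) * (ε'/(m:ℝ)) + (1/(m:ℝ)) * L * ((ε'+L)/(m:ℝ)) * (k:ℝ)^2) * F
            + (L/(m:ℝ)) * F := by
        calc ‖T h f - f - h • Q f‖
            ≤ ‖T r g - g‖ + ‖S^[k] f - f - ((k:ℝ) * (1/(m:ℝ))) • Q f‖
              + ‖((k:ℝ) * (1/(m:ℝ))) • Q f - h • Q f‖ := by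
              rw [hsplit]; exact norm_add₃_le
          _ ≤ _ := add_le_add (add_le_add hb1 hb2) hb3
      -- numerics
      have hkm : (k:ℝ)/(m:ℝ) ≤ h := by rw [div_le_iff₀ hmpos]; linarith
      have e1 : (k:ℝ) * (ε'/(m:ℝ)) ≤ ε' := by
        have h1 : (k:ℝ) * (ε'/(m:ℝ)) = ((k:ℝ)/(m:ℝ)) * ε' := by ring
        rw [h1]
        have h6 := mul_le_mul_of_nonneg_right (le_trans hkm hh1) hε'pos.le
        linarith
      have e2 : (1/(m:ℝ)) * L * ((ε'+L)/(m:ℝ)) * (k:ℝ)^2 ≤ L*ε' + L^2*h^2 := by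
        have h2 : (1/(m:ℝ)) * L * ((ε'+L)/(m:ℝ)) * (k:ℝ)^2 = L*(ε'+L)*((k:ℝ)/(m:ℝ))^2 := by
          ring
        rw [h2]
        have h3 : ((k:ℝ)/(m:ℝ))^2 ≤ h^2 := by nlinarith [div_nonneg hk0 hmpos.le]
        have h4 : h^2 ≤ 1 := by nlinarith
        have h5 := mul_le_mul_of_nonneg_left h3 (mul_nonneg hL0 (add_nonneg hε'pos.le hL0))
        have h6 := mul_le_mul_of_nonneg_left h4 (mul_nonneg hL0 hε'pos.le)
        nlinarith [h5, h6]
      have e5 : (2+L) * (ε' * F) ≤ η/2 := by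
        have hεeq : ε' * (4*(F+1)*(1+L)) = η := by
          rw [hε']
          exact div_mul_cancel₀ η (by positivity)
        nlinarith [hεeq, hε'pos.le, hF0, hL0, mul_nonneg hε'pos.le hF0,
          mul_nonneg (mul_nonneg hε'pos.le hF0) hL0, mul_nonneg hε'pos.le hL0]
      have e6 : (L/(m:ℝ)) * F ≤ η/4 := by
        have h5 : L*F/(m:ℝ) ≤ L*(F+1)/(m:ℝ) := by
          apply (div_le_div_iff_of_pos_right hmpos).mpr
          nlinarith
        calc (L/(m:ℝ)) * F = L*F/(m:ℝ) := by ring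
          _ ≤ L*(F+1)/(m:ℝ) := h5
          _ ≤ η/4 := hmL
      have e7 : ((k:ℝ) * (ε'/(m:ℝ)) + (1/(m:ℝ)) * L * ((ε'+L)/(m:ℝ)) * (k:ℝ)^2) * F
          ≤ (ε' + (L*ε' + L^2*h^2)) * F :=
        mul_le_mul_of_nonneg_right (add_le_add e1 e2) hF0
      linarith [htotal, e5, e6, e7]
    by_contra hcon
    push_neg at hcon
    have := main ((‖T h f - f - h • Q f‖ - (L^2*h^2)*‖f‖)/2) (by linarith)
    linarith
  -- Euler scheme estimate
  have hmain : ∀ t : ℝ, 0 ≤ t → ∀ n : ℕ, 1 ≤ n → t ≤ (n:ℝ) →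
      ∀ f, ‖euler Q t n f - T t f‖ ≤ (Real.exp (t*L) * (L^2 * t^2) / (n:ℝ)) * ‖f‖ := by
    intro t ht n hn htn f
    have hnpos : (0:ℝ) < (n:ℝ) := by
      have : (1:ℝ) ≤ (n:ℝ) := by exact_mod_cast hn
      linarith
    have hh0 : (0:ℝ) ≤ t/(n:ℝ) := by positivity
    have hh1 : t/(n:ℝ) ≤ 1 := by rw [_root_.div_le_one hnpos]; exact htn
    have hSnorm : ∀ u, ‖T (t/(n:ℝ)) u‖ ≤ ‖u‖ := hTnorm _ hh0
    have hRlip : ∀ u v, ‖(u + (t/(n:ℝ)) • Q u) - (v + (t/(n:ℝ)) • Q v)‖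
        ≤ (1 + (t/(n:ℝ))*L) * ‖u - v‖ := by
      intro u v
      have h1 : (u + (t/(n:ℝ)) • Q u) - (v + (t/(n:ℝ)) • Q v)
          = (u - v) + (t/(n:ℝ)) • (Q u - Q v) := by
        ext x
        simp only [BoundedContinuousFunction.coe_smul, BoundedContinuousFunction.sub_apply,
          BoundedContinuousFunction.add_apply, smul_eq_mul]
        ring
      rw [h1]
      have h2 : ‖(t/(n:ℝ)) • (Q u - Q v)‖ ≤ (t/(n:ℝ)) * (L * ‖u - v‖) := by
        rw [norm_smul (t/(n:ℝ)) (Q u - Q v), Real.norm_eq_abs, abs_of_nonneg hh0]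
        exact mul_le_mul_of_nonneg_left (hQLip u v) hh0
      calc ‖(u-v) + (t/(n:ℝ)) • (Q u - Q v)‖
          ≤ ‖u - v‖ + ‖(t/(n:ℝ)) • (Q u - Q v)‖ := norm_add_le _ _
        _ ≤ ‖u-v‖ + (t/(n:ℝ))*(L*‖u-v‖) := by linarith
        _ = (1 + (t/(n:ℝ))*L)*‖u-v‖ := by ring
    have hψop : ∀ u, ‖(u + (t/(n:ℝ)) • Q u) - T (t/(n:ℝ)) u‖
        ≤ (L^2*(t/(n:ℝ))^2) * ‖u‖ := by
      intro u
      have h1 : (u + (t/(n:ℝ)) • Q u) - T (t/(n:ℝ)) u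
          = -(T (t/(n:ℝ)) u - u - (t/(n:ℝ)) • Q u) := by abel
      rw [h1, norm_neg]
      exact hpsi (t/(n:ℝ)) hh0 hh1 u
    have hl1 : (1:ℝ) ≤ 1 + (t/(n:ℝ))*L := by nlinarith [mul_nonneg hh0 hL0]
    have hcmp := iter_compare (S := T (t/(n:ℝ))) (R := fun u => u + (t/(n:ℝ)) • Q u)
      hSnorm hRlip hl1 hψop (by positivity) n f
    have heul : euler Q t n f = (fun u => u + (t/(n:ℝ)) • Q u)^[n] f := rfl
    have hTt : T t f = (T (t/(n:ℝ)))^[n] f := by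
      have h1 : t = (n:ℝ) * (t/(n:ℝ)) := by field_simp
      conv_lhs => rw [h1, hTiter _ hh0 n]
    have hexp : (1 + (t/(n:ℝ))*L)^n ≤ Real.exp (t*L) := by
      have h1 : 1 + (t/(n:ℝ))*L ≤ Real.exp ((t/(n:ℝ))*L) := by
        have := Real.add_one_le_exp ((t/(n:ℝ))*L)
        linarith
      have h2 : (1+(t/(n:ℝ))*L)^n ≤ (Real.exp ((t/(n:ℝ))*L))^n :=
        pow_le_pow_left₀ (by linarith) h1 n
      rw [← Real.exp_nat_mul] at h2
      have h3 : (n:ℝ) * ((t/(n:ℝ))*L) = t*L := by field_simp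
      rwa [h3] at h2
    have heq : (n:ℝ) * (L^2*(t/(n:ℝ))^2) = L^2*t^2/(n:ℝ) := by
      field_simp
    calc ‖euler Q t n f - T t f‖
        = ‖(fun u => u + (t/(n:ℝ)) • Q u)^[n] f - (T (t/(n:ℝ)))^[n] f‖ := by rw [heul, hTt]
      _ ≤ (n:ℝ) * (1+(t/(n:ℝ))*L)^n * (L^2*(t/(n:ℝ))^2) * ‖f‖ := hcmp
      _ = (1+(t/(n:ℝ))*L)^n * ((n:ℝ)*(L^2*(t/(n:ℝ))^2)) * ‖f‖ := by ring
      _ = (1+(t/(n:ℝ))*L)^n * (L^2*t^2/(n:ℝ)) * ‖f‖ := by rw [heq]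
      _ ≤ Real.exp (t*L) * (L^2*t^2/(n:ℝ)) * ‖f‖ := by
          have hq0 : (0:ℝ) ≤ L^2*t^2/(n:ℝ) := by positivity
          have h6 := mul_le_mul_of_nonneg_right hexp (mul_nonneg hq0 (norm_nonneg f))
          nlinarith [h6]
      _ = (Real.exp (t*L) * (L^2*t^2) / (n:ℝ)) * ‖f‖ := by ring
  refine ⟨⟨⟨hQ1, hQ2, hQ3, hQ4⟩, hQtop⟩, ?_⟩
  intro t ht
  refine tendsto_of_tendsto_of_tendsto_of_le_of_le'
    (tendsto_const_nhds : Tendsto (fun _ : ℕ => (0:ℝ≥0∞)) atTop (nhds 0))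
    (?_ : Tendsto (fun n : ℕ => ENNReal.ofReal (Real.exp (t*L) * (L^2*t^2) / (n:ℝ)))
      atTop (nhds 0)) ?_ ?_
  · have h1 := tendsto_const_div_atTop_nhds_zero_nat (Real.exp (t*L) * (L^2*t^2))
    have h2 := ENNReal.tendsto_ofReal h1
    simpa using h2
  · exact Filter.Eventually.of_forall fun n => zero_le
  · filter_upwards [eventually_ge_atTop (max 1 ⌈t⌉₊)] with n hn
    have hn1 : 1 ≤ n := le_trans (le_max_left 1 ⌈t⌉₊) hn
    have hnt : t ≤ (n:ℝ) := by
      refine le_trans (Nat.le_ceil t) ?_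
      exact_mod_cast le_trans (le_max_right 1 ⌈t⌉₊) hn
    apply opSemiNorm_le_of_bound _ _ (by positivity)
    intro f
    have := hmain t ht n hn1 hnt f
    simpa [Pi.sub_apply] using this
end

section
/- Let Q be a bounded sublinear rate operator on ℬ, and for each t ≥ 0 let e^{tQ} denote the limit in operator seminorm of the sequence ((I + (t/n)Q)^n)_{n∈ℕ}. Then Q is downward continuous if and only if e^{tQ} is downward continuous for every t ≥ 0. -/
open Filter Topology BoundedContinuousFunction ENNReal NNReal

section aux

variable {X : Type*} [TopologicalSpace X]

lemma aux_opSemiNorm_bound (A : Op X) (hA : opSemiNorm A ≠ ⊤)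
    (f : BoundedContinuousFunction X ℝ) (hf : f ≠ 0) :
    ‖A f‖ ≤ (opSemiNorm A).toReal * ‖f‖ := by
  have h1 : (‖A f‖₊ : ℝ≥0∞) / (‖f‖₊ : ℝ≥0∞) ≤ opSemiNorm A := by
    rw [opSemiNorm]
    exact le_iSup₂ (f := fun (g : BoundedContinuousFunction X ℝ) (_ : g ≠ 0) =>
      (‖A g‖₊ : ℝ≥0∞) / (‖g‖₊ : ℝ≥0∞)) f hf
  have hf0 : (‖f‖₊ : ℝ≥0∞) ≠ 0 := by simpa using hf
  have h2 : (‖A f‖₊ : ℝ≥0∞) ≤ opSemiNorm A * ‖f‖₊ :=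
    (ENNReal.div_le_iff hf0 ENNReal.coe_ne_top).mp h1
  have h3 := ENNReal.toReal_mono (ENNReal.mul_ne_top hA ENNReal.coe_ne_top) h2
  simpa [ENNReal.toReal_mul] using h3

lemma aux_opDist_bound (A B : Op X) (hfin : opDist A B ≠ ⊤)
    (f : BoundedContinuousFunction X ℝ) :
    ‖A f - B f‖ ≤ (opDist A B).toReal * (1 + ‖f‖) := by
  have hd0 : 0 ≤ (opDist A B).toReal := ENNReal.toReal_nonneg
  have hf0 : 0 ≤ ‖f‖ := norm_nonneg f
  rcases eq_or_ne f 0 with rfl | hf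
  · have h1 : (‖A 0 - B 0‖₊ : ℝ≥0∞) ≤ opDist A B := self_le_add_right _ _
    have h2 := ENNReal.toReal_mono hfin h1
    simp only [coe_toReal, coe_nnnorm] at h2
    nlinarith [norm_nonneg (0 : BoundedContinuousFunction X ℝ)]
  · have hsemi : opSemiNorm (A - B) ≠ ⊤ := by
      intro h
      apply hfin
      simp [opDist, h]
    have h1 : ‖(A - B) f‖ ≤ (opSemiNorm (A - B)).toReal * ‖f‖ :=
      aux_opSemiNorm_bound (A - B) hsemi f hf
    have h2 : (opSemiNorm (A - B)).toReal ≤ (opDist A B).toReal :=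
      ENNReal.toReal_mono hfin (le_add_self)
    have h3 : (A - B) f = A f - B f := rfl
    rw [h3] at h1
    nlinarith [ENNReal.toReal_nonneg (a := opSemiNorm (A - B))]

end aux

section qlem
set_option linter.unusedSectionVars false

variable {X : Type*} [TopologicalSpace X] [DiscreteTopology X]
variable {Q : Op X}

lemma aux_Q_zero (hQ : IsSublinearRate Q) : Q 0 = 0 := by
  have h := hQ.1 0 le_rfl 0
  simpa using h

lemma aux_Q_norm (hQ : IsSublinearRate Q) (hQb : opSemiNorm Q ≠ ⊤) (f : BoundedContinuousFunction X ℝ) :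
    ‖Q f‖ ≤ (opSemiNorm Q).toReal * ‖f‖ := by
  rcases eq_or_ne f 0 with rfl | hf
  · simp [aux_Q_zero hQ]
  · exact aux_opSemiNorm_bound Q hQb f hf

lemma aux_Q_sub (hQ : IsSublinearRate Q) (f g : BoundedContinuousFunction X ℝ) (x : X) :
    Q f x ≤ Q g x + Q (f - g) x := by
  have h := hQ.2.1 (f - g) g x
  rw [sub_add_cancel] at h
  linarith

lemma aux_Q_val_le (hQ : IsSublinearRate Q) (hQb : opSemiNorm Q ≠ ⊤) (f : BoundedContinuousFunction X ℝ) (x : X) :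
    Q f x ≤ (opSemiNorm Q).toReal * ‖f‖ := by
  have h1 : Q f x ≤ ‖Q f‖ := by
    have := (Q f).norm_coe_le_norm x
    rw [Real.norm_eq_abs] at this
    exact (le_abs_self _).trans this
  exact h1.trans (aux_Q_norm hQ hQb f)

lemma aux_Q_lip (hQ : IsSublinearRate Q) (hQb : opSemiNorm Q ≠ ⊤) (f g : BoundedContinuousFunction X ℝ) (x : X) :
    |Q f x - Q g x| ≤ (opSemiNorm Q).toReal * ‖f - g‖ := by
  rw [abs_sub_le_iff]
  constructor
  · have h1 := aux_Q_sub hQ f g x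
    have h2 := aux_Q_val_le hQ hQb (f - g) x
    linarith
  · have h1 := aux_Q_sub hQ g f x
    have h2 := aux_Q_val_le hQ hQb (g - f) x
    rw [norm_sub_rev] at h2
    linarith

lemma aux_Q_lip_norm (hQ : IsSublinearRate Q) (hQb : opSemiNorm Q ≠ ⊤) (f g : BoundedContinuousFunction X ℝ) :
    ‖Q f - Q g‖ ≤ (opSemiNorm Q).toReal * ‖f - g‖ := by
  apply (BoundedContinuousFunction.norm_le (by positivity)).mpr
  intro x
  have := aux_Q_lip hQ hQb f g x
  simpa [Real.norm_eq_abs] using this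

lemma aux_indic_self (x : X) : indic x x = 1 := by
  simp only [indic, BoundedContinuousFunction.coe_ofNormedAddCommGroup]
  exact Set.indicator_of_mem rfl (fun _ => (1:ℝ))

lemma aux_indic_ne {x y : X} (h : y ≠ x) : indic x y = 0 := by
  simp only [indic, BoundedContinuousFunction.coe_ofNormedAddCommGroup]
  exact Set.indicator_of_notMem h (fun _ => (1:ℝ))

lemma aux_indic_norm_le (x : X) : ‖(indic x : BoundedContinuousFunction X ℝ)‖ ≤ 1 := by
  apply (BoundedContinuousFunction.norm_le (by norm_num)).mpr
  intro y
  rcases eq_or_ne y x with rfl | h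
  · rw [aux_indic_self, Real.norm_eq_abs]; norm_num
  · rw [aux_indic_ne h, Real.norm_eq_abs]; norm_num

lemma aux_Q_neg (hQ : IsSublinearRate Q) (hQb : opSemiNorm Q ≠ ⊤) (u : BoundedContinuousFunction X ℝ) (hu : ∀ y, u y ≤ 0) (x : X) :
    Q u x ≤ (opSemiNorm Q).toReal * (-(u x)) := by
  classical
  set L := (opSemiNorm Q).toReal with hL
  set w : BoundedContinuousFunction X ℝ := u - (u x) • indic x with hw
  have hwx : w x = 0 := by
    simp [hw, aux_indic_self]
  have hwy : ∀ y, w y ≤ 0 := by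
    intro y
    rcases eq_or_ne y x with rfl | hy
    · rw [hwx]
    · have : w y = u y := by simp [hw, aux_indic_ne hy]
      rw [this]; exact hu y
  have hbdd : BddAbove (Set.range fun y => w y) := by
    refine ⟨‖w‖, ?_⟩
    rintro _ ⟨y, rfl⟩
    have := w.norm_coe_le_norm y
    rw [Real.norm_eq_abs] at this
    exact (le_abs_self _).trans this
  haveI : Nonempty X := ⟨x⟩
  have hsup : (⨆ y, w y) = w x := by
    apply le_antisymm
    · exact ciSup_le fun y => (hwy y).trans_eq hwx.symm
    · exact le_ciSup hbdd x
  have hQw : Q w x ≤ 0 := hQ.2.2.2 w x hsup (le_of_eq hwx.symm)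
  have hsplit : Q u x ≤ Q w x + Q ((u x) • indic x) x := by
    have h := hQ.2.1 w ((u x) • indic x) x
    have he : w + (u x) • indic x = u := by
      rw [hw]; abel
    rw [he] at h
    exact h
  have hux : 0 ≤ -(u x) := by linarith [hu x]
  have hhom : (u x) • (indic x : BoundedContinuousFunction X ℝ)
      = (-(u x)) • (-(indic x)) := by
    rw [smul_neg, neg_smul, neg_neg]
  have hQh : Q ((u x) • indic x) = (-(u x)) • Q (-(indic x)) := by
    rw [hhom]; exact hQ.1 (-(u x)) hux (-(indic x))
  have hval : Q ((u x) • indic x) x = (-(u x)) * Q (-(indic x)) x := by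
    rw [hQh]; rfl
  have hQi : Q (-(indic x)) x ≤ L := by
    have h1 := aux_Q_val_le hQ hQb (-(indic x)) x
    have h2 : ‖-(indic x : BoundedContinuousFunction X ℝ)‖ ≤ 1 := by
      rw [norm_neg]; exact aux_indic_norm_le x
    have hL0 : 0 ≤ L := ENNReal.toReal_nonneg
    nlinarith
  have : Q ((u x) • indic x) x ≤ (-(u x)) * L := by
    rw [hval]
    exact mul_le_mul_of_nonneg_left hQi hux
  linarith [hsplit, hQw, this]

lemma aux_step_mono (hQ : IsSublinearRate Q) (hQb : opSemiNorm Q ≠ ⊤) {h : ℝ}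
    (h0 : 0 ≤ h) (h1 : h * (opSemiNorm Q).toReal ≤ 1)
    (f g : BoundedContinuousFunction X ℝ) (hfg : ∀ y, f y ≤ g y) (x : X) :
    f x + h * Q f x ≤ g x + h * Q g x := by
  set L := (opSemiNorm Q).toReal with hL
  have hL0 : 0 ≤ L := ENNReal.toReal_nonneg
  have hs := aux_Q_sub hQ f g x
  have hn : Q (f - g) x ≤ L * (-((f - g) x)) := by
    refine aux_Q_neg hQ hQb (f - g) (fun y => ?_) x
    simp only [BoundedContinuousFunction.coe_sub, Pi.sub_apply]
    linarith [hfg y]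
  simp only [BoundedContinuousFunction.coe_sub, Pi.sub_apply] at hn
  have hd : 0 ≤ g x - f x := by linarith [hfg x]
  nlinarith [mul_le_mul_of_nonneg_right h1 hd, mul_le_mul_of_nonneg_left hn h0]

lemma aux_iter_apply (h : ℝ) (u : BoundedContinuousFunction X ℝ) (x : X) :
    (u + h • Q u) x = u x + h * Q u x := by
  simp

lemma aux_iter_mono (hQ : IsSublinearRate Q) (hQb : opSemiNorm Q ≠ ⊤) {h : ℝ}
    (h0 : 0 ≤ h) (h1 : h * (opSemiNorm Q).toReal ≤ 1) (n : ℕ) :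
    ∀ (f g : BoundedContinuousFunction X ℝ), (∀ y, f y ≤ g y) →
      ∀ y, (fun v => v + h • Q v)^[n] f y ≤ (fun v => v + h • Q v)^[n] g y := by
  induction n with
  | zero => intro f g hfg y; simpa using hfg y
  | succ n ih =>
    intro f g hfg y
    rw [Function.iterate_succ_apply', Function.iterate_succ_apply']
    simp only [aux_iter_apply]
    exact aux_step_mono hQ hQb h0 h1 _ _ (ih f g hfg) y

lemma aux_iter_dc (hQ : IsSublinearRate Q) (hQb : opSemiNorm Q ≠ ⊤)
    (hdc : DownwardContinuous Q) {h : ℝ}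
    (h0 : 0 ≤ h) (h1 : h * (opSemiNorm Q).toReal ≤ 1) (n : ℕ) :
    DownwardContinuous ((fun v => v + h • Q v)^[n] : Op X) := by
  induction n with
  | zero =>
    intro f g hdec hptw x
    simpa using hptw x
  | succ n ih =>
    intro f g hdec hptw x
    have hdec' : ∀ k y, (fun v => v + h • Q v)^[n] (f (k + 1)) y ≤
        (fun v => v + h • Q v)^[n] (f k) y :=
      fun k => aux_iter_mono hQ hQb h0 h1 n (f (k+1)) (f k) (hdec k)
    have hptw' : ∀ y, Tendsto (fun k => (fun v => v + h • Q v)^[n] (f k) y) atTop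
        (nhds ((fun v => v + h • Q v)^[n] g y)) := ih f g hdec hptw
    have hQt : Tendsto (fun k => Q ((fun v => v + h • Q v)^[n] (f k)) x) atTop
        (nhds (Q ((fun v => v + h • Q v)^[n] g) x)) :=
      hdc (fun k => (fun v => v + h • Q v)^[n] (f k)) _ hdec' hptw' x
    simp only [Function.iterate_succ_apply', aux_iter_apply]
    exact (hptw' x).add (hQt.const_mul h)

lemma aux_norm_smul_nonneg {h : ℝ} (h0 : 0 ≤ h) (v : BoundedContinuousFunction X ℝ) :
    ‖h • v‖ = h * ‖v‖ := by
  have := norm_smul h v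
  rw [this, Real.norm_eq_abs, abs_of_nonneg h0]

lemma aux_iter_norm (hQ : IsSublinearRate Q) (hQb : opSemiNorm Q ≠ ⊤) {h : ℝ}
    (h0 : 0 ≤ h) (k : ℕ) (f : BoundedContinuousFunction X ℝ) :
    ‖(fun v => v + h • Q v)^[k] f‖ ≤ (1 + h * (opSemiNorm Q).toReal)^k * ‖f‖ := by
  set L := (opSemiNorm Q).toReal with hLdef
  have hL0 : 0 ≤ L := ENNReal.toReal_nonneg
  induction k with
  | zero => simp
  | succ k ih =>
    rw [Function.iterate_succ_apply']
    set u := (fun v => v + h • Q v)^[k] f with hu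
    calc ‖u + h • Q u‖ ≤ ‖u‖ + ‖h • Q u‖ := norm_add_le _ _
      _ = ‖u‖ + h * ‖Q u‖ := by rw [aux_norm_smul_nonneg h0]
      _ ≤ ‖u‖ + h * (L * ‖u‖) := by
          have := aux_Q_norm hQ hQb u
          nlinarith
      _ = (1 + h * L) * ‖u‖ := by ring
      _ ≤ (1 + h * L) * ((1 + h * L)^k * ‖f‖) := by
          exact mul_le_mul_of_nonneg_left ih (by nlinarith)
      _ = (1 + h * L)^(k+1) * ‖f‖ := by ring

lemma aux_iter_sub (hQ : IsSublinearRate Q) (hQb : opSemiNorm Q ≠ ⊤) {h : ℝ}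
    (h0 : 0 ≤ h) (k : ℕ) (f : BoundedContinuousFunction X ℝ) :
    ‖(fun v => v + h • Q v)^[k] f - f‖ ≤
      ((1 + h * (opSemiNorm Q).toReal)^k - 1) * ‖f‖ := by
  set L := (opSemiNorm Q).toReal with hLdef
  have hL0 : 0 ≤ L := ENNReal.toReal_nonneg
  induction k with
  | zero => simp
  | succ k ih =>
    rw [Function.iterate_succ_apply']
    set u := (fun v => v + h • Q v)^[k] f with hu
    have h1 : u + h • Q u - f = h • Q u + (u - f) := by abel
    have h2 : ‖h • Q u‖ ≤ h * (L * ((1 + h * L)^k * ‖f‖)) := by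
      rw [aux_norm_smul_nonneg h0]
      have ha := aux_Q_norm hQ hQb u
      have hb := aux_iter_norm hQ hQb h0 k f
      have hc : ‖Q u‖ ≤ L * ((1 + h * L)^k * ‖f‖) := by
        refine ha.trans ?_
        exact mul_le_mul_of_nonneg_left hb hL0
      exact mul_le_mul_of_nonneg_left hc h0
    calc ‖u + h • Q u - f‖ = ‖h • Q u + (u - f)‖ := by rw [h1]
      _ ≤ ‖h • Q u‖ + ‖u - f‖ := norm_add_le _ _
      _ ≤ h * (L * ((1 + h * L)^k * ‖f‖)) + ((1 + h * L)^k - 1) * ‖f‖ := by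
          exact add_le_add h2 ih
      _ = ((1 + h * L)^(k+1) - 1) * ‖f‖ := by ring

lemma aux_iter_taylor (hQ : IsSublinearRate Q) (hQb : opSemiNorm Q ≠ ⊤) {h : ℝ}
    (h0 : 0 ≤ h) (n : ℕ) (f : BoundedContinuousFunction X ℝ) :
    ‖(fun v => v + h • Q v)^[n] f - f - ((n : ℝ) * h) • Q f‖ ≤
      (n : ℝ) * (h * (opSemiNorm Q).toReal) *
        ((1 + h * (opSemiNorm Q).toReal)^n - 1) * ‖f‖ := by
  set L := (opSemiNorm Q).toReal with hLdef
  have hL0 : 0 ≤ L := ENNReal.toReal_nonneg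
  induction n with
  | zero => simp
  | succ n ih =>
    rw [Function.iterate_succ_apply']
    push_cast
    set u := (fun v => v + h • Q v)^[n] f with hu
    have halg : u + h • Q u - f - (((n : ℕ) + 1 : ℝ) * h) • Q f =
        (h • Q u - h • Q f) + (u - f - ((n : ℝ) * h) • Q f) := by
      have : (((n : ℕ) + 1 : ℝ) * h) • Q f = ((n : ℝ) * h) • Q f + h • Q f := by
        rw [← add_smul]; ring_nf
      rw [this]; abel
    have h2 : ‖h • Q u - h • Q f‖ ≤ h * L * (((1 + h * L)^n - 1) * ‖f‖) := by
      rw [show h • Q u - h • Q f = h • (Q u - Q f) from (smul_sub h (Q u) (Q f)).symm,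
        aux_norm_smul_nonneg h0]
      have ha := aux_Q_lip_norm hQ hQb u f
      have hb := aux_iter_sub hQ hQb h0 n f
      have hc : ‖Q u - Q f‖ ≤ L * (((1 + h * L)^n - 1) * ‖f‖) := by
        refine ha.trans ?_
        exact mul_le_mul_of_nonneg_left hb hL0
      calc h * ‖Q u - Q f‖ ≤ h * (L * (((1 + h * L)^n - 1) * ‖f‖)) :=
            mul_le_mul_of_nonneg_left hc h0
        _ = h * L * (((1 + h * L)^n - 1) * ‖f‖) := by ring
    have hr1 : (1:ℝ) ≤ 1 + h * L := by nlinarith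
    have hpow : (1 + h * L)^n ≤ (1 + h * L)^(n+1) :=
      pow_le_pow_right₀ hr1 (Nat.le_succ n)
    have hpow1 : (1:ℝ) ≤ (1 + h * L)^n := one_le_pow₀ hr1
    calc ‖u + h • Q u - f - (((n:ℝ) + 1) * h) • Q f‖
        = ‖(h • Q u - h • Q f) + (u - f - ((n : ℝ) * h) • Q f)‖ := by
          rw [halg]
      _ ≤ ‖h • Q u - h • Q f‖ + ‖u - f - ((n : ℝ) * h) • Q f‖ := norm_add_le _ _
      _ ≤ h * L * (((1 + h * L)^n - 1) * ‖f‖) +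
            (n : ℝ) * (h * L) * ((1 + h * L)^n - 1) * ‖f‖ := add_le_add h2 ih
      _ ≤ ((n:ℝ) + 1) * (h * L) * ((1 + h * L)^(n+1) - 1) * ‖f‖ := by
          have hn0 : (0:ℝ) ≤ (n : ℝ) := Nat.cast_nonneg n
          have hB : (0:ℝ) ≤ (1 + h * L)^n - 1 := by linarith
          have hB' : (1 + h * L)^n - 1 ≤ (1 + h * L)^(n+1) - 1 := by linarith
          have hf0 : (0:ℝ) ≤ ‖f‖ := norm_nonneg f
          have hhL : (0:ℝ) ≤ h * L := by positivity
          nlinarith [mul_le_mul_of_nonneg_left hB' (mul_nonneg hhL hf0),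
            mul_le_mul_of_nonneg_left hB' (mul_nonneg (mul_nonneg hn0 hhL) hf0)]

lemma aux_pow_le_exp (a : ℝ) (ha : 0 ≤ a) (n : ℕ) (hn : 1 ≤ n) :
    (1 + a / n)^n ≤ Real.exp a := by
  have hn0 : (n : ℝ) ≠ 0 := Nat.cast_ne_zero.mpr (by omega)
  have h1 : 1 + a / n ≤ Real.exp (a / n) := by
    have := Real.add_one_le_exp (a / n)
    linarith
  have h2 : (1 + a / n)^n ≤ (Real.exp (a / n))^n := by
    apply pow_le_pow_left₀ (by positivity) h1
  calc (1 + a / n)^n ≤ (Real.exp (a / n))^n := h2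
    _ = Real.exp (a / n * n) := by rw [← Real.exp_nat_mul]; ring_nf
    _ = Real.exp a := by rw [div_mul_cancel₀ a hn0]

lemma aux_euler_est (hQ : IsSublinearRate Q) (hQb : opSemiNorm Q ≠ ⊤)
    {t : ℝ} (ht : 0 ≤ t) {n : ℕ} (hn : 1 ≤ n) (f : BoundedContinuousFunction X ℝ) :
    ‖euler Q t n f - f - t • Q f‖ ≤
      t * (opSemiNorm Q).toReal *
        (Real.exp (t * (opSemiNorm Q).toReal) - 1) * ‖f‖ := by
  set L := (opSemiNorm Q).toReal with hLdef
  have hL0 : 0 ≤ L := ENNReal.toReal_nonneg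
  have hn0 : (n : ℝ) ≠ 0 := Nat.cast_ne_zero.mpr (by omega)
  have hh0 : 0 ≤ t / (n : ℝ) := by positivity
  have key := aux_iter_taylor hQ hQb hh0 n f
  have he1 : (n : ℝ) * (t / (n : ℝ)) = t := by field_simp
  have he2 : t / (n : ℝ) * L = t * L / (n : ℝ) := by ring
  have heuler : euler Q t n f = (fun v => v + (t / (n : ℝ)) • Q v)^[n] f := rfl
  rw [he1] at key
  rw [heuler]
  refine key.trans ?_
  have hb1 : (1 + t / (n:ℝ) * L)^n ≤ Real.exp (t * L) := by
    have h := aux_pow_le_exp (t * L) (by positivity) n hn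
    rw [show t / (n:ℝ) * L = t * L / (n:ℝ) by ring]
    exact h
  have hmain : (n : ℝ) * (t / (n:ℝ) * L) = t * L := by field_simp
  rw [show (n : ℝ) * (t / (n:ℝ) * L) * ((1 + t / (n:ℝ) * L)^n - 1) * ‖f‖
      = ((n : ℝ) * (t / (n:ℝ) * L)) * (((1 + t / (n:ℝ) * L)^n - 1) * ‖f‖) by ring,
    hmain]
  rw [show t * L * (Real.exp (t * L) - 1) * ‖f‖ = (t * L) * ((Real.exp (t * L) - 1) * ‖f‖) by ring]
  apply mul_le_mul_of_nonneg_left _ (by positivity)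
  apply mul_le_mul_of_nonneg_right _ (norm_nonneg f)
  linarith

lemma aux_E_est (hQ : IsSublinearRate Q) (hQb : opSemiNorm Q ≠ ⊤)
    {t : ℝ} (ht : 0 ≤ t) (Et : Op X)
    (hconv : Tendsto (fun n => opDist (euler Q t n) Et) atTop (nhds 0))
    (f : BoundedContinuousFunction X ℝ) (x : X) :
    |Et f x - f x - t * Q f x| ≤
      t * (opSemiNorm Q).toReal *
        (Real.exp (t * (opSemiNorm Q).toReal) - 1) * ‖f‖ := by
  set L := (opSemiNorm Q).toReal with hLdef
  apply _root_.le_of_forall_pos_le_add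
  intro ε hε
  set δ := ε / (1 + ‖f‖) with hδ
  have hδ0 : 0 < δ := by positivity
  have hev : ∀ᶠ n in atTop, opDist (euler Q t n) Et ≤ ENNReal.ofReal δ := by
    rw [ENNReal.tendsto_nhds_zero] at hconv
    exact hconv (ENNReal.ofReal δ) (by simp [hδ0])
  obtain ⟨n, hn1, hnd⟩ := (hev.and (eventually_ge_atTop 1)).exists
  have hfin : opDist (euler Q t n) Et ≠ ⊤ :=
    ne_top_of_le_ne_top ENNReal.ofReal_ne_top hn1
  have h1 : ‖euler Q t n f - Et f‖ ≤ (opDist (euler Q t n) Et).toReal * (1 + ‖f‖) :=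
    aux_opDist_bound _ _ hfin f
  have h2 : (opDist (euler Q t n) Et).toReal ≤ δ :=
    ENNReal.toReal_le_of_le_ofReal hδ0.le hn1
  have h3 : ‖euler Q t n f - Et f‖ ≤ ε := by
    have hf1 : (0:ℝ) < 1 + ‖f‖ := by positivity
    calc ‖euler Q t n f - Et f‖ ≤ (opDist (euler Q t n) Et).toReal * (1 + ‖f‖) := h1
      _ ≤ δ * (1 + ‖f‖) := mul_le_mul_of_nonneg_right h2 hf1.le
      _ = ε := by rw [hδ]; field_simp
  have h4 := aux_euler_est hQ hQb ht hnd f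
  have h5 : |euler Q t n f x - f x - t * Q f x| ≤ t * L * (Real.exp (t * L) - 1) * ‖f‖ := by
    have : euler Q t n f x - f x - t * Q f x = (euler Q t n f - f - t • Q f) x := by
      simp
    rw [this]
    have := (euler Q t n f - f - t • Q f).norm_coe_le_norm x
    rw [Real.norm_eq_abs] at this
    exact this.trans h4
  have h6 : |Et f x - euler Q t n f x| ≤ ε := by
    have : Et f x - euler Q t n f x = -((euler Q t n f - Et f) x) := by simp
    rw [this, abs_neg]
    have h7 := (euler Q t n f - Et f).norm_coe_le_norm x
    rw [Real.norm_eq_abs] at h7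
    exact h7.trans h3
  calc |Et f x - f x - t * Q f x|
      ≤ |Et f x - euler Q t n f x| + |euler Q t n f x - f x - t * Q f x| := by
        have : |(Et f x - euler Q t n f x) + (euler Q t n f x - f x - t * Q f x)| ≤ |Et f x - euler Q t n f x| + |euler Q t n f x - f x - t * Q f x| :=
          abs_add_le (Et f x - euler Q t n f x) (euler Q t n f x - f x - t * Q f x)
        convert this using 2
        ring
    _ ≤ ε + t * L * (Real.exp (t * L) - 1) * ‖f‖ := add_le_add h6 h5
    _ = t * L * (Real.exp (t * L) - 1) * ‖f‖ + ε := by ring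

lemma aux_seq_bound (f : ℕ → BoundedContinuousFunction X ℝ)
    (g : BoundedContinuousFunction X ℝ)
    (hdec : ∀ n x, f (n + 1) x ≤ f n x)
    (hptw : ∀ x, Tendsto (fun n => f n x) atTop (nhds (g x))) (k : ℕ) :
    ‖f k‖ ≤ max ‖f 0‖ ‖g‖ := by
  have hanti : ∀ y : X, Antitone (fun n => f n y) :=
    fun y => antitone_nat_of_succ_le (fun n => hdec n y)
  apply (BoundedContinuousFunction.norm_le (le_max_of_le_left (norm_nonneg _))).mpr
  intro y
  rw [Real.norm_eq_abs, abs_le]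
  constructor
  · have hg : g y ≤ f k y := by
      refine le_of_tendsto (hptw y) ?_
      filter_upwards [eventually_ge_atTop k] with n hn
      exact hanti y hn
    have : -‖g‖ ≤ g y := by
      have := g.norm_coe_le_norm y
      rw [Real.norm_eq_abs] at this
      linarith [abs_le.mp this]
    have hm : ‖g‖ ≤ max ‖f 0‖ ‖g‖ := le_max_right _ _
    linarith
  · have h0 : f k y ≤ f 0 y := hanti y (Nat.zero_le k)
    have : f 0 y ≤ ‖f 0‖ := by
      have := (f 0).norm_coe_le_norm y
      rw [Real.norm_eq_abs] at this
      linarith [abs_le.mp this]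
    have hm : ‖f 0‖ ≤ max ‖f 0‖ ‖g‖ := le_max_left _ _
    linarith

end qlem

theorem stmt_19 {X : Type*} [Countable X] [TopologicalSpace X] [DiscreteTopology X]
    (Q : Op X) (hQ : IsSublinearRate Q) (hQb : opSemiNorm Q ≠ ⊤)
    (E : ℝ → Op X)
    (hE : ∀ t : ℝ, 0 ≤ t → Tendsto (fun n => opDist (euler Q t n) (E t)) atTop (nhds 0)) :
    DownwardContinuous Q ↔ ∀ t : ℝ, 0 ≤ t → DownwardContinuous (E t) := by
  set L := (opSemiNorm Q).toReal with hLdef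
  have hL0 : 0 ≤ L := ENNReal.toReal_nonneg
  constructor
  · -- forward: Q downward continuous ⟹ every E t downward continuous
    intro hdc t ht f g hdec hptw x
    rw [Metric.tendsto_atTop]
    intro ε hε
    set M := max ‖f 0‖ ‖g‖ with hM
    have hM0 : (0:ℝ) ≤ M := le_max_of_le_left (norm_nonneg _)
    have hMk : ∀ k, ‖f k‖ ≤ M := aux_seq_bound f g hdec hptw
    set δ := ε / (4 * (1 + M)) with hδ
    have hδ0 : 0 < δ := by positivity
    have hev1 : ∀ᶠ n in atTop, opDist (euler Q t n) (E t) ≤ ENNReal.ofReal δ := by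
      have h := hE t ht
      rw [ENNReal.tendsto_nhds_zero] at h
      exact h (ENNReal.ofReal δ) (by simp [hδ0])
    have hev2 : ∀ᶠ n : ℕ in atTop, t * L ≤ (n : ℝ) := by
      filter_upwards [eventually_ge_atTop ⌈t * L⌉₊] with n hn
      calc t * L ≤ (⌈t * L⌉₊ : ℝ) := Nat.le_ceil _
        _ ≤ (n : ℝ) := Nat.cast_le.mpr hn
    obtain ⟨n, hnd, hnL, hn1⟩ := (hev1.and (hev2.and (eventually_ge_atTop 1))).exists
    have hfin : opDist (euler Q t n) (E t) ≠ ⊤ :=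
      ne_top_of_le_ne_top ENNReal.ofReal_ne_top hnd
    have hdtR : (opDist (euler Q t n) (E t)).toReal ≤ δ :=
      ENNReal.toReal_le_of_le_ofReal hδ0.le hnd
    have hn0 : (0:ℝ) < (n : ℝ) := by exact_mod_cast hn1
    have hh0 : 0 ≤ t / (n : ℝ) := by positivity
    have hhL : (t / (n : ℝ)) * L ≤ 1 := by
      rw [div_mul_eq_mul_div, div_le_one hn0]
      exact hnL
    have hedc : Tendsto (fun k => euler Q t n (f k) x) atTop (nhds (euler Q t n g x)) :=
      aux_iter_dc hQ hQb hdc hh0 hhL n f g hdec hptw x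
    rw [Metric.tendsto_atTop] at hedc
    obtain ⟨N, hN⟩ := hedc (ε / 4) (by positivity)
    refine ⟨N, fun k hk => ?_⟩
    have bnd : ∀ u : BoundedContinuousFunction X ℝ, ‖u‖ ≤ M →
        |E t u x - euler Q t n u x| ≤ ε / 4 := by
      intro u hu
      have h1 : ‖euler Q t n u - E t u‖ ≤ (opDist (euler Q t n) (E t)).toReal * (1 + ‖u‖) :=
        aux_opDist_bound _ _ hfin u
      have h2 : (opDist (euler Q t n) (E t)).toReal * (1 + ‖u‖) ≤ δ * (1 + M) := by
        apply mul_le_mul hdtR (by linarith) (by positivity) hδ0.le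
      have h3 : δ * (1 + M) = ε / 4 := by
        rw [hδ]; field_simp
      have h4 : |E t u x - euler Q t n u x| ≤ ‖euler Q t n u - E t u‖ := by
        have h5 := (euler Q t n u - E t u).norm_coe_le_norm x
        rw [Real.norm_eq_abs] at h5
        have : E t u x - euler Q t n u x = -((euler Q t n u - E t u) x) := by simp
        rw [this, abs_neg]
        exact h5
      linarith
    have b1 := bnd (f k) (hMk k)
    have b3 := bnd g (le_max_right _ _)
    have b2 : |euler Q t n (f k) x - euler Q t n g x| < ε / 4 := by
      have := hN k hk
      rwa [Real.dist_eq] at this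
    rw [Real.dist_eq]
    calc |E t (f k) x - E t g x|
        ≤ |E t (f k) x - euler Q t n (f k) x| + |euler Q t n (f k) x - euler Q t n g x|
            + |euler Q t n g x - E t g x| := by
          have := abs_sub_le (E t (f k) x) (euler Q t n (f k) x) (E t g x)
          have h7 := abs_sub_le (euler Q t n (f k) x) (euler Q t n g x) (E t g x)
          linarith
      _ < ε / 4 + ε / 4 + ε / 4 := by
          have h8 : |euler Q t n g x - E t g x| ≤ ε / 4 := by
            rw [abs_sub_comm]; exact b3
          linarith
      _ < ε := by linarith
  · -- backward: every E t downward continuous ⟹ Q downward continuous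
    intro hdcE f g hdec hptw x
    rw [Metric.tendsto_atTop]
    intro ε hε
    set M := max ‖f 0‖ ‖g‖ with hM
    have hM0 : (0:ℝ) ≤ M := le_max_of_le_left (norm_nonneg _)
    have hMk : ∀ k, ‖f k‖ ≤ M := aux_seq_bound f g hdec hptw
    -- choose a small time t > 0
    have hcont : Continuous (fun s : ℝ => L * (Real.exp (s * L) - 1) * M) := by
      continuity
    have htend : Tendsto (fun s : ℝ => L * (Real.exp (s * L) - 1) * M)
        (nhdsWithin 0 (Set.Ioi 0)) (nhds 0) := by
      have h : Tendsto (fun s : ℝ => L * (Real.exp (s * L) - 1) * M)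
          (nhdsWithin (0:ℝ) (Set.Ioi 0)) (nhds (L * (Real.exp (0 * L) - 1) * M)) :=
        (hcont.tendsto 0).mono_left nhdsWithin_le_nhds
      simpa using h
    have hevs : ∀ᶠ s in nhdsWithin (0:ℝ) (Set.Ioi 0),
        L * (Real.exp (s * L) - 1) * M < ε / 3 :=
      htend.eventually_lt_const (by positivity)
    obtain ⟨t, htb, htmem⟩ := (hevs.and eventually_mem_nhdsWithin).exists
    have ht : (0:ℝ) < t := htmem
    set C := L * (Real.exp (t * L) - 1) * M with hC
    have hexp1 : (1:ℝ) ≤ Real.exp (t * L) := Real.one_le_exp (by positivity)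
    have hC0 : 0 ≤ C := by
      rw [hC]
      have : (0:ℝ) ≤ Real.exp (t * L) - 1 := by linarith
      positivity
    have hest : ∀ u : BoundedContinuousFunction X ℝ, ‖u‖ ≤ M →
        |(E t u x - u x) / t - Q u x| ≤ C := by
      intro u hu
      have h1 := aux_E_est hQ hQb ht.le (E t) (hE t ht.le) u x
      have h2 : t * L * (Real.exp (t * L) - 1) * ‖u‖ ≤ t * C := by
        rw [hC]
        have he : (0:ℝ) ≤ Real.exp (t * L) - 1 := by linarith
        have h4 : (0:ℝ) ≤ t * L * (Real.exp (t * L) - 1) :=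
          mul_nonneg (by positivity) he
        have h5 := mul_le_mul_of_nonneg_left hu h4
        linarith
      have h3 : (E t u x - u x) / t - Q u x = (E t u x - u x - t * Q u x) / t := by
        field_simp
      rw [h3, abs_div, abs_of_pos ht, div_le_iff₀ ht]
      calc |E t u x - u x - t * Q u x| ≤ t * L * (Real.exp (t * L) - 1) * ‖u‖ := h1
        _ ≤ t * C := h2
        _ = C * t := by ring
    have hmid : Tendsto (fun k => (E t (f k) x - f k x) / t) atTop
        (nhds ((E t g x - g x) / t)) :=
      ((hdcE t ht.le f g hdec hptw x).sub (hptw x)).div_const t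
    rw [Metric.tendsto_atTop] at hmid
    obtain ⟨N, hN⟩ := hmid (ε / 3) (by positivity)
    refine ⟨N, fun k hk => ?_⟩
    have e1 : |Q (f k) x - (E t (f k) x - f k x) / t| ≤ C := by
      rw [abs_sub_comm]; exact hest (f k) (hMk k)
    have e3 : |(E t g x - g x) / t - Q g x| ≤ C := hest g (le_max_right _ _)
    have e2 : |(E t (f k) x - f k x) / t - (E t g x - g x) / t| < ε / 3 := by
      have := hN k hk
      rwa [Real.dist_eq] at this
    have hCe : C < ε / 3 := htb
    rw [Real.dist_eq]
    calc |Q (f k) x - Q g x|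
        ≤ |Q (f k) x - (E t (f k) x - f k x) / t|
            + |(E t (f k) x - f k x) / t - (E t g x - g x) / t|
            + |(E t g x - g x) / t - Q g x| := by
          have := abs_sub_le (Q (f k) x) ((E t (f k) x - f k x) / t) (Q g x)
          have h7 := abs_sub_le ((E t (f k) x - f k x) / t) ((E t g x - g x) / t) (Q g x)
          linarith
      _ < ε / 3 + ε / 3 + ε / 3 := by linarith
      _ = ε := by ring
end
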